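/- arXiv:1204.2579 — 5 statements merged into one kernel-verified Lean document; each statement's English description precedes it below -/
import Mathlib

section
/- Consistency of semiparametric Z-estimators with bundled parameters (Lemma 2.1). Suppose: (a) θ0 is the unique, well-separated zero of θ ↦ Ψ(θ, η0(θ)) on Θ, i.e. for every ε > 0 there exists δ > 0 such that |Ψ(θ, η0(θ))| ≥ δ whenever θ ∈ Θ and |θ − θ0| ≥ ε; (b) ‖η̂_n − η0‖ → 0 in probability; (c) for every sequence of reals δ_n ↓ 0, sup over θ ∈ Θ and η ∈ H with ‖η − η0‖ ≤ δ_n of |Ψ_n(θ, η(θ)) − Ψ(θ, η0(θ))| / (1 + |Ψ_n(θ, η(θ))| + |Ψ(θ, η0(θ))|) converges to 0 in probability. Then any sequence of random elements θ̂_n of Θ satisfying Ψ_n(θ̂_n, η̂_n(θ̂_n)) = o_p(1) converges in probability to θ0. -/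
open MeasureTheory Filter Topology ProbabilityTheory
open scoped ENNReal NNReal InnerProductSpace

noncomputable section

abbrev Euc (d : ℕ) := EuclideanSpace ℝ (Fin d)

/-- `ξ n / a n → 0` in probability, i.e. `ξ n = o_p(a n)`. -/
def oP {Ω : Type*} [MeasurableSpace Ω] (P : Measure Ω) (ξ : ℕ → Ω → ℝ) (a : ℕ → ℝ) : Prop :=
  ∀ ε : ℝ, 0 < ε → Filter.Tendsto (fun n => P {ω | ε * a n ≤ ξ n ω}) Filter.atTop (nhds 0)

/-- `ξ n = O_p(a n)`: for every `ε > 0` there is `M` with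
`P(ξ n > M * a n) ≤ ε` for all sufficiently large `n`. -/
def OP {Ω : Type*} [MeasurableSpace Ω] (P : Measure Ω) (ξ : ℕ → Ω → ℝ) (a : ℕ → ℝ) : Prop :=
  ∀ ε : ℝ, 0 < ε → ∃ M : ℝ, ∀ᶠ n in Filter.atTop, P {ω | M * a n < ξ n ω} ≤ ENNReal.ofReal ε

open Classical in
/-- real-valued indicator of a proposition. -/
def ind (p : Prop) : ℝ := if p then 1 else 0

/-- Lemma 2.1: consistency of semiparametric Z-estimators with bundled parameters. -/
theorem consistency_of_bundled_Z_estimators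
    {d : ℕ} (hd : 1 ≤ d) {E : Type*} [NormedAddCommGroup E] [NormedSpace ℝ E]
    {Ω : Type*} [MeasurableSpace Ω] (P : Measure Ω) [IsProbabilityMeasure P]
    (Θ : Set (Euc d)) (hΘ : IsCompact Θ)
    (θ0 : Euc d) (hθ0 : θ0 ∈ Θ)
    (Ψn : ℕ → Ω → Euc d → E → Euc d)
    (Ψ : Euc d → E → Euc d)
    (η0 : Euc d → E)
    (hzero : Ψ θ0 (η0 θ0) = 0)
    (θhat : ℕ → Ω → Euc d) (hθhatΘ : ∀ n ω, θhat n ω ∈ Θ)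
    (ηhat : ℕ → Ω → Euc d → E)
    -- (a) θ0 is the unique, well-separated zero of θ ↦ Ψ(θ, η0(θ)) on Θ
    (hsep : ∀ ε : ℝ, 0 < ε → ∃ δ : ℝ, 0 < δ ∧
      ∀ θ ∈ Θ, ε ≤ ‖θ - θ0‖ → δ ≤ ‖Ψ θ (η0 θ)‖)
    -- (b) ‖η̂_n − η0‖ → 0 in probability (sup-norm over Θ)
    (hηcons : oP P (fun n ω => ⨆ θ : Θ, ‖ηhat n ω θ - η0 θ‖) (fun _ => 1))
    -- (c) uniform convergence condition (2.3)
    (hequic : ∀ δ : ℕ → ℝ, (∀ n, 0 < δ n) → Antitone δ →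
      Filter.Tendsto δ Filter.atTop (nhds 0) →
      oP P (fun n ω =>
        ⨆ θ : Θ, ⨆ η : {η : Euc d → E // (⨆ θ' : Θ, ‖η θ' - η0 θ'‖) ≤ δ n},
          ‖Ψn n ω θ (η.1 θ) - Ψ θ (η0 θ)‖ /
            (1 + ‖Ψn n ω θ (η.1 θ)‖ + ‖Ψ θ (η0 θ)‖)) (fun _ => 1))
    -- the near-root property Ψ_n(θ̂_n, η̂_n(θ̂_n)) = o_p(1)
    (hroot : oP P (fun n ω => ‖Ψn n ω (θhat n ω) (ηhat n ω (θhat n ω))‖) (fun _ => 1)) :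
    -- conclusion: θ̂_n → θ0 in probability
    oP P (fun n ω => ‖θhat n ω - θ0‖) (fun _ => 1) := by
  classical
  haveI hΘne : Nonempty Θ := ⟨⟨θ0, hθ0⟩⟩
  intro ε hε
  simp only [mul_one]
  obtain ⟨δs, hδs, hsep'⟩ := hsep ε hε
  -- abbreviation for the sup-norm distance of ηhat to η0
  set X : ℕ → Ω → ℝ := fun n ω => ⨆ θ : Θ, ‖ηhat n ω θ - η0 θ‖ with hXdef
  -- Step 1: choose N k such that for n ≥ N k the 1/(k+1)-deviation prob is ≤ 1/(k+1)
  have hNex : ∀ k : ℕ, ∃ N : ℕ, ∀ n ≥ N,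
      P {ω | (1 / ((k : ℝ) + 1)) ≤ X n ω} ≤ ENNReal.ofReal (1 / ((k : ℝ) + 1)) := by
    intro k
    have hpos : (0 : ℝ) < 1 / ((k : ℝ) + 1) := by positivity
    have h := hηcons (1 / ((k : ℝ) + 1)) hpos
    simp only [mul_one] at h
    have h2 : ∀ᶠ n in atTop,
        P {ω | (1 / ((k : ℝ) + 1)) ≤ X n ω} < ENNReal.ofReal (1 / ((k : ℝ) + 1)) :=
      h.eventually_lt_const (show (0:ℝ≥0∞) < ENNReal.ofReal (1/((k:ℝ)+1)) from ENNReal.ofReal_pos.2 hpos)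
    obtain ⟨N, hN⟩ := eventually_atTop.1 h2
    exact ⟨N, fun n hn => (hN n hn).le⟩
  choose N hNspec using hNex
  set M : ℕ → ℕ := fun k => k + (Finset.range (k + 1)).sup N with hMdef
  have hNM : ∀ k, N k ≤ M k := fun k =>
    le_add_left (Finset.le_sup (Finset.self_mem_range_succ k))
  have hkM : ∀ k, k ≤ M k := fun k => Nat.le_add_right _ _
  have hMmono : Monotone M := by
    intro a b hab
    exact Nat.add_le_add hab
      (Finset.sup_mono (Finset.range_subset_range.2 (Nat.add_le_add_right hab 1)))
  set g : ℕ → ℕ := fun n => Nat.findGreatest (fun k => M k ≤ n) n with hgdef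
  have hgmono : Monotone g := by
    intro a b hab
    exact Nat.findGreatest_mono (fun k hk => hk.trans hab) hab
  have hgtop : Tendsto g atTop atTop := by
    rw [tendsto_atTop_atTop]
    refine fun k => ⟨M k, fun n hn => ?_⟩
    exact Nat.le_findGreatest ((hkM k).trans hn) hn
  have hgspec : ∀ n, M 0 ≤ n → M (g n) ≤ n := fun n hn =>
    Nat.findGreatest_spec (P := fun k => M k ≤ n) (Nat.zero_le n) hn
  set δ : ℕ → ℝ := fun n => 1 / ((g n : ℝ) + 1) with hδdef
  have hδpos : ∀ n, 0 < δ n := fun n => by positivity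
  have hδanti : Antitone δ := by
    intro a b hab
    have : (g a : ℝ) + 1 ≤ (g b : ℝ) + 1 := by
      have := hgmono hab; exact_mod_cast Nat.add_le_add_right this 1
    exact one_div_le_one_div_of_le (by positivity) this
  have hδ0 : Tendsto δ atTop (nhds 0) := by
    have h1 : Tendsto (fun m : ℕ => 1 / ((m : ℝ) + 1)) atTop (nhds 0) :=
      tendsto_one_div_add_atTop_nhds_zero_nat
    exact h1.comp hgtop
  -- Step 2: the probability that X n ≥ δ n tends to zero
  have hXδ : Tendsto (fun n => P {ω | δ n ≤ X n ω}) atTop (nhds 0) := by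
    have hb : ∀ᶠ n in atTop, P {ω | δ n ≤ X n ω} ≤ ENNReal.ofReal (δ n) := by
      filter_upwards [eventually_ge_atTop (M 0)] with n hn
      exact hNspec (g n) n ((hNM (g n)).trans (hgspec n hn))
    have hb2 : Tendsto (fun n => ENNReal.ofReal (δ n)) atTop (nhds 0) := by
      have := (ENNReal.continuous_ofReal.tendsto 0).comp hδ0
      simpa [Function.comp_def] using this
    exact tendsto_of_tendsto_of_tendsto_of_le_of_le' tendsto_const_nhds hb2
      (Eventually.of_forall fun n => zero_le) hb
  -- Step 3: apply the equicontinuity hypothesis to δ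
  have hR := hequic δ hδpos hδanti hδ0
  set R : ℕ → Ω → ℝ := fun n ω =>
    ⨆ θ : Θ, ⨆ η : {η : Euc d → E // (⨆ θ' : Θ, ‖η θ' - η0 θ'‖) ≤ δ n},
      ‖Ψn n ω θ (η.1 θ) - Ψ θ (η0 θ)‖ /
        (1 + ‖Ψn n ω θ (η.1 θ)‖ + ‖Ψ θ (η0 θ)‖) with hRdef
  set ρ : ℝ := min (1 / 2) (δs / 4) with hρdef
  have hρpos : 0 < ρ := lt_min (by norm_num) (by linarith)
  have hρ1 : ρ ≤ 1 / 2 := min_le_left _ _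
  have hρ2 : ρ ≤ δs / 4 := min_le_right _ _
  have hRρ := hR ρ hρpos
  simp only [mul_one] at hRρ
  set t : ℝ := δs / 8 with htdef
  have hYt := hroot t (by linarith)
  simp only [mul_one] at hYt
  -- Step 4: the key event inclusion
  have hincl : ∀ n, {ω | ε ≤ ‖θhat n ω - θ0‖} ⊆
      {ω | δ n ≤ X n ω} ∪ ({ω | ρ ≤ R n ω} ∪
        {ω | t ≤ ‖Ψn n ω (θhat n ω) (ηhat n ω (θhat n ω))‖}) := by
    intro n ω hω
    by_contra hcon
    simp only [Set.mem_union, Set.mem_setOf_eq, not_or, not_le] at hcon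
    obtain ⟨hXs, hRs, hYs⟩ := hcon
    have hω' : ε ≤ ‖θhat n ω - θ0‖ := hω
    set θ : Euc d := θhat n ω with hθdef
    have hθΘ : θ ∈ Θ := hθhatΘ n ω
    have hB : δs ≤ ‖Ψ θ (η0 θ)‖ := hsep' θ hθΘ hω'
    set η : Euc d → E := ηhat n ω with hηdef
    have hηmem : (⨆ θ' : Θ, ‖η θ' - η0 θ'‖) ≤ δ n := hXs.le
    -- each ratio is ≤ 1
    have hratio1 : ∀ (θ' : Θ)
        (η' : {η : Euc d → E // (⨆ θ'' : Θ, ‖η θ'' - η0 θ''‖) ≤ δ n}),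
        ‖Ψn n ω θ' (η'.1 θ') - Ψ θ' (η0 θ')‖ /
          (1 + ‖Ψn n ω θ' (η'.1 θ')‖ + ‖Ψ θ' (η0 θ')‖) ≤ 1 := by
      intro θ' η'
      rw [div_le_one (by positivity)]
      have h := norm_sub_le (Ψn n ω θ' (η'.1 θ')) (Ψ θ' (η0 θ'))
      linarith
    haveI hSubNe : Nonempty {η : Euc d → E // (⨆ θ'' : Θ, ‖η θ'' - η0 θ''‖) ≤ δ n} := by
      refine ⟨⟨η0, ?_⟩⟩
      have : (⨆ _ : Θ, (0 : ℝ)) = 0 := ciSup_const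
      simp only [sub_self, norm_zero]
      rw [this]
      exact (hδpos n).le
    have hbdd_inner : ∀ θ' : Θ, BddAbove (Set.range fun
        η' : {η : Euc d → E // (⨆ θ'' : Θ, ‖η θ'' - η0 θ''‖) ≤ δ n} =>
        ‖Ψn n ω θ' (η'.1 θ') - Ψ θ' (η0 θ')‖ /
          (1 + ‖Ψn n ω θ' (η'.1 θ')‖ + ‖Ψ θ' (η0 θ')‖)) := by
      intro θ'
      refine ⟨1, ?_⟩
      rintro x ⟨η', rfl⟩
      exact hratio1 θ' η'
    have hbdd_outer : BddAbove (Set.range fun θ' : Θ =>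
        ⨆ η' : {η : Euc d → E // (⨆ θ'' : Θ, ‖η θ'' - η0 θ''‖) ≤ δ n},
          ‖Ψn n ω θ' (η'.1 θ') - Ψ θ' (η0 θ')‖ /
            (1 + ‖Ψn n ω θ' (η'.1 θ')‖ + ‖Ψ θ' (η0 θ')‖)) := by
      refine ⟨1, ?_⟩
      rintro x ⟨θ', rfl⟩
      exact ciSup_le fun η' => hratio1 θ' η'
    set θΘ : Θ := ⟨θ, hθΘ⟩ with hθΘdef
    have hq1 : ‖Ψn n ω θ (η θ) - Ψ θ (η0 θ)‖ /
        (1 + ‖Ψn n ω θ (η θ)‖ + ‖Ψ θ (η0 θ)‖) ≤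
        ⨆ η' : {η : Euc d → E // (⨆ θ'' : Θ, ‖η θ'' - η0 θ''‖) ≤ δ n},
          ‖Ψn n ω θΘ (η'.1 θΘ) - Ψ θΘ (η0 θΘ)‖ /
            (1 + ‖Ψn n ω θΘ (η'.1 θΘ)‖ + ‖Ψ θΘ (η0 θΘ)‖) :=
      le_ciSup (hbdd_inner θΘ) ⟨η, hηmem⟩
    have hq2 : (⨆ η' : {η : Euc d → E // (⨆ θ'' : Θ, ‖η θ'' - η0 θ''‖) ≤ δ n},
          ‖Ψn n ω θΘ (η'.1 θΘ) - Ψ θΘ (η0 θΘ)‖ /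
            (1 + ‖Ψn n ω θΘ (η'.1 θΘ)‖ + ‖Ψ θΘ (η0 θΘ)‖)) ≤ R n ω :=
      le_ciSup hbdd_outer θΘ
    have hq : ‖Ψn n ω θ (η θ) - Ψ θ (η0 θ)‖ /
        (1 + ‖Ψn n ω θ (η θ)‖ + ‖Ψ θ (η0 θ)‖) < ρ :=
      lt_of_le_of_lt (hq1.trans hq2) hRs
    set A : ℝ := ‖Ψn n ω θ (η θ)‖ with hAdef
    set B : ℝ := ‖Ψ θ (η0 θ)‖ with hBdef
    have hA0 : 0 ≤ A := norm_nonneg _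
    have hB0 : 0 ≤ B := norm_nonneg _
    have hAt : A < t := hYs
    have hnum : B - A ≤ ‖Ψn n ω θ (η θ) - Ψ θ (η0 θ)‖ := by
      have := norm_sub_norm_le (Ψ θ (η0 θ)) (Ψn n ω θ (η θ))
      rw [norm_sub_rev] at this
      linarith
    have hden : (0 : ℝ) < 1 + A + B := by positivity
    have hlt : ‖Ψn n ω θ (η θ) - Ψ θ (η0 θ)‖ < ρ * (1 + A + B) :=
      (div_lt_iff₀ hden).1 hq
    have hρB : ρ * B ≤ (1 / 2) * B := mul_le_mul_of_nonneg_right hρ1 hB0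
    have hρA : ρ * A ≤ (1 / 2) * A := mul_le_mul_of_nonneg_right hρ1 hA0
    nlinarith [hρpos.le]
  -- Step 5: conclude by squeezing
  have hsum : Tendsto (fun n => P {ω | δ n ≤ X n ω} + (P {ω | ρ ≤ R n ω} +
      P {ω | t ≤ ‖Ψn n ω (θhat n ω) (ηhat n ω (θhat n ω))‖})) atTop (nhds 0) := by
    have := hXδ.add (hRρ.add hYt)
    simpa using this
  refine tendsto_of_tendsto_of_tendsto_of_le_of_le' tendsto_const_nhds hsum
    (Eventually.of_forall fun n => zero_le) (Eventually.of_forall fun n => ?_)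
  calc P {ω | ε ≤ ‖θhat n ω - θ0‖} ≤
      P ({ω | δ n ≤ X n ω} ∪ ({ω | ρ ≤ R n ω} ∪
        {ω | t ≤ ‖Ψn n ω (θhat n ω) (ηhat n ω (θhat n ω))‖})) := measure_mono (hincl n)
    _ ≤ P {ω | δ n ≤ X n ω} + P ({ω | ρ ≤ R n ω} ∪
        {ω | t ≤ ‖Ψn n ω (θhat n ω) (ηhat n ω (θhat n ω))‖}) := measure_union_le _ _
    _ ≤ P {ω | δ n ≤ X n ω} + (P {ω | ρ ≤ R n ω} +
        P {ω | t ≤ ‖Ψn n ω (θhat n ω) (ηhat n ω (θhat n ω))‖}) :=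
      add_le_add_right (measure_union_le _ _) _
end
end

section
/- Tightness of the rescaled population estimating function at the estimator (equation (import) in the proof of Lemma 2.2). Assume: Ψ(θ0, η0(θ0)) = 0; Ψ_n(θ̂_n, η̂_n(θ̂_n)) = o_p(n^{-1/2}); (i) stochastic equicontinuity: |√n(Ψ_n − Ψ)(θ̂_n, η̂_n(θ̂_n)) − √n(Ψ_n − Ψ)(θ0, η0(θ0))| / (1 + √n|Ψ_n(θ̂_n, η̂_n(θ̂_n))| + √n|Ψ(θ̂_n, η̂_n(θ̂_n))|) = o_p(1); and (ii) √n Ψ_n(θ0, η0(θ0)) = O_p(1). Then √n |Ψ(θ̂_n, η̂_n(θ̂_n))| = O_p(1). -/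
open MeasureTheory Filter Topology ProbabilityTheory
open scoped ENNReal NNReal InnerProductSpace

noncomputable section

/-- Equation (import) in the proof of Lemma 2.2:
`√n |Ψ(θ̂_n, η̂_n(θ̂_n))| = O_p(1)`. -/
theorem tightness_of_population_estimating_function
    {d : ℕ} (hd : 1 ≤ d) {E : Type*} [NormedAddCommGroup E] [NormedSpace ℝ E]
    {Ω : Type*} [MeasurableSpace Ω] (P : Measure Ω) [IsProbabilityMeasure P]
    (Θ : Set (Euc d)) (hΘ : IsCompact Θ)
    (θ0 : Euc d) (hθ0 : θ0 ∈ Θ)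
    (Ψn : ℕ → Ω → Euc d → E → Euc d)
    (Ψ : Euc d → E → Euc d)
    (η0 : Euc d → E)
    (hzero : Ψ θ0 (η0 θ0) = 0)
    (θhat : ℕ → Ω → Euc d) (hθhatΘ : ∀ n ω, θhat n ω ∈ Θ)
    (ηhat : ℕ → Ω → Euc d → E)
    -- Ψ_n(θ̂_n, η̂_n(θ̂_n)) = o_p(n^{-1/2})
    (hroot : oP P (fun n ω => Real.sqrt n * ‖Ψn n ω (θhat n ω) (ηhat n ω (θhat n ω))‖)
      (fun _ => 1))
    -- (i) stochastic equicontinuity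
    (hse : oP P (fun n ω =>
        ‖(Real.sqrt n) • (Ψn n ω (θhat n ω) (ηhat n ω (θhat n ω)) -
              Ψ (θhat n ω) (ηhat n ω (θhat n ω))) -
          (Real.sqrt n) • (Ψn n ω θ0 (η0 θ0) - Ψ θ0 (η0 θ0))‖ /
          (1 + Real.sqrt n * ‖Ψn n ω (θhat n ω) (ηhat n ω (θhat n ω))‖ +
            Real.sqrt n * ‖Ψ (θhat n ω) (ηhat n ω (θhat n ω))‖)) (fun _ => 1))
    -- (ii) √n Ψ_n(θ0, η0(θ0)) = O_p(1)
    (htight : OP P (fun n ω => Real.sqrt n * ‖Ψn n ω θ0 (η0 θ0)‖) (fun _ => 1))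
 :
    OP P (fun n ω => Real.sqrt n * ‖Ψ (θhat n ω) (ηhat n ω (θhat n ω))‖) (fun _ => 1) := by
  intro ε hε
  obtain ⟨M, hM⟩ := htight (ε/3) (by linarith)
  refine ⟨4 + 2*M, ?_⟩
  have hc : (0:ℝ≥0∞) < ENNReal.ofReal (ε/3) := ENNReal.ofReal_pos.mpr (by linarith)
  have h1 := (hroot 1 one_pos).eventually_lt_const hc
  have h2 := (hse (1/2) (by norm_num)).eventually_lt_const hc
  filter_upwards [h1, h2, hM] with n p1 p2 p3
  set A : Ω → ℝ := fun ω => Real.sqrt n * ‖Ψn n ω (θhat n ω) (ηhat n ω (θhat n ω))‖ with hA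
  set B : Ω → ℝ := fun ω => Real.sqrt n * ‖Ψ (θhat n ω) (ηhat n ω (θhat n ω))‖ with hB
  set C : Ω → ℝ := fun ω => Real.sqrt n * ‖Ψn n ω θ0 (η0 θ0)‖ with hC
  set N : Ω → ℝ := fun ω =>
      ‖(Real.sqrt n) • (Ψn n ω (θhat n ω) (ηhat n ω (θhat n ω)) -
            Ψ (θhat n ω) (ηhat n ω (θhat n ω))) -
        (Real.sqrt n) • (Ψn n ω θ0 (η0 θ0) - Ψ θ0 (η0 θ0))‖ with hN
  have hsub : {ω | (4 + 2*M) * 1 < B ω} ⊆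
      ({ω | (1/2 : ℝ) * 1 ≤ N ω / (1 + A ω + B ω)} ∪ {ω | (1:ℝ) * 1 ≤ A ω})
        ∪ {ω | M * 1 < C ω} := by
    intro ω hω
    simp only [Set.mem_setOf_eq, mul_one] at hω
    by_contra hco
    simp only [Set.mem_union, Set.mem_setOf_eq, mul_one, not_or, not_le, not_lt] at hco
    obtain ⟨⟨hD, hAlt⟩, hClt⟩ := hco
    have hsq : (0:ℝ) ≤ Real.sqrt n := Real.sqrt_nonneg _
    have hApos : 0 ≤ A ω := mul_nonneg hsq (norm_nonneg _)
    have hBpos : 0 ≤ B ω := mul_nonneg hsq (norm_nonneg _)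
    have hdpos : 0 < 1 + A ω + B ω := by linarith
    have hNlt : N ω < 1/2 * (1 + A ω + B ω) := (div_lt_iff₀ hdpos).mp hD
    -- triangle inequality: B ≤ A + N + C
    have hid : (Real.sqrt n) • (Ψ (θhat n ω) (ηhat n ω (θhat n ω))) =
        (Real.sqrt n) • (Ψn n ω (θhat n ω) (ηhat n ω (θhat n ω))) -
          ((Real.sqrt n) • (Ψn n ω (θhat n ω) (ηhat n ω (θhat n ω)) -
              Ψ (θhat n ω) (ηhat n ω (θhat n ω))) -
            (Real.sqrt n) • (Ψn n ω θ0 (η0 θ0) - Ψ θ0 (η0 θ0))) -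
          (Real.sqrt n) • (Ψn n ω θ0 (η0 θ0) - Ψ θ0 (η0 θ0)) := by
      simp only [smul_sub]; abel
    have htri : ‖(Real.sqrt n) • (Ψ (θhat n ω) (ηhat n ω (θhat n ω)))‖ ≤
        ‖(Real.sqrt n) • (Ψn n ω (θhat n ω) (ηhat n ω (θhat n ω)))‖ + N ω +
          ‖(Real.sqrt n) • (Ψn n ω θ0 (η0 θ0) - Ψ θ0 (η0 θ0))‖ := by
      rw [hid]
      exact (norm_sub_le _ _).trans (add_le_add (norm_sub_le _ _) le_rfl)
    have hnorm1 : ‖(Real.sqrt n) • (Ψ (θhat n ω) (ηhat n ω (θhat n ω)))‖ = B ω := by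
      rw [norm_smul, Real.norm_eq_abs, abs_of_nonneg hsq]
    have hnorm2 : ‖(Real.sqrt n) • (Ψn n ω (θhat n ω) (ηhat n ω (θhat n ω)))‖ = A ω := by
      rw [norm_smul, Real.norm_eq_abs, abs_of_nonneg hsq]
    have hnorm3 : ‖(Real.sqrt n) • (Ψn n ω θ0 (η0 θ0) - Ψ θ0 (η0 θ0))‖ = C ω := by
      rw [hzero, sub_zero, norm_smul, Real.norm_eq_abs, abs_of_nonneg hsq]
    rw [hnorm1, hnorm2, hnorm3] at htri
    linarith
  calc P {ω | (4 + 2*M) * 1 < B ω}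
      ≤ P (({ω | (1/2 : ℝ) * 1 ≤ N ω / (1 + A ω + B ω)} ∪ {ω | (1:ℝ) * 1 ≤ A ω})
        ∪ {ω | M * 1 < C ω}) := measure_mono hsub
    _ ≤ (P {ω | (1/2 : ℝ) * 1 ≤ N ω / (1 + A ω + B ω)} + P {ω | (1:ℝ) * 1 ≤ A ω})
        + P {ω | M * 1 < C ω} :=
      (measure_union_le _ _).trans (add_le_add (measure_union_le _ _) le_rfl)
    _ ≤ (ENNReal.ofReal (ε/3) + ENNReal.ofReal (ε/3)) + ENNReal.ofReal (ε/3) :=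
      add_le_add (add_le_add p2.le p1.le) p3
    _ = ENNReal.ofReal ε := by
      rw [← ENNReal.ofReal_add (by linarith) (by linarith),
        ← ENNReal.ofReal_add (by linarith) (by linarith)]
      congr 1; ring
end
end

section
/- Root-n consistency of the Z-estimator (first conclusion of Lemma 2.2). Assume θ̂_n is a consistent estimator of θ0 (θ̂_n → θ0 in probability) with Ψ_n(θ̂_n, η̂_n(θ̂_n)) = o_p(n^{-1/2}), θ0 is the unique zero of θ ↦ Ψ(θ, η0(θ)) on Θ, ‖η̂_n − η0‖ = O_p(n^{-β}) for some β ∈ (0, 1/2], and conditions (i)–(iv) hold: (i) stochastic equicontinuity: |√n(Ψ_n − Ψ)(θ̂_n, η̂_n(θ̂_n)) − √n(Ψ_n − Ψ)(θ0, η0(θ0))| / (1 + √n|Ψ_n(θ̂_n, η̂_n(θ̂_n))| + √n|Ψ(θ̂_n, η̂_n(θ̂_n))|) = o_p(1); (ii) √n Ψ_n(θ0, η0(θ0)) = O_p(1); (iii) smoothness: there exist a d×d matrix Ψ̇_1 and a continuous linear map Ψ̇_2 : E → ℝ^d such that, for (θ, η) ∈ Θ0 × H0 as θ → θ0 and ‖η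 − η0‖ → 0, |Ψ(θ, η(θ)) − Ψ(θ0, η0(θ0)) − (Ψ̇_1 + Ψ̇_2 ∘ η̇_0(θ0))(θ − θ0) − Ψ̇_2[(η − η0)(θ0)]| = o(|θ − θ0|) + o(‖η − η0‖) if β = 1/2, or = o(|θ − θ0|) + O(‖η − η0‖^α) for some α > 1 with αβ > 1/2 if 0 < β < 1/2, and the matrix A = −Ψ̇_1 − Ψ̇_2 ∘ η̇_0(θ0) is nonsingular; (iv) √n Ψ̇_2[(η̂_n − η0)(θ0)] = O_p(1). Then √n |θ̂_n − θ0| = O_p(1). -/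
open MeasureTheory Filter Topology ProbabilityTheory
open scoped ENNReal NNReal InnerProductSpace

noncomputable section

set_option maxHeartbeats 1000000

/-- Lemma 2.2, first conclusion: root-n consistency of the Z-estimator. -/
theorem root_n_consistency_of_bundled_Z_estimator
    {d : ℕ} (hd : 1 ≤ d) {E : Type*} [NormedAddCommGroup E] [NormedSpace ℝ E]
    {Ω : Type*} [MeasurableSpace Ω] (P : Measure Ω) [IsProbabilityMeasure P]
    (Θ : Set (Euc d)) (hΘ : IsCompact Θ)
    (θ0 : Euc d) (hθ0 : θ0 ∈ Θ)
    (Ψn : ℕ → Ω → Euc d → E → Euc d)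
    (Ψ : Euc d → E → Euc d)
    (η0 : Euc d → E)
    (hzero : Ψ θ0 (η0 θ0) = 0)
    (θhat : ℕ → Ω → Euc d) (hθhatΘ : ∀ n ω, θhat n ω ∈ Θ)
    (ηhat : ℕ → Ω → Euc d → E)
    -- Ψ_n(θ̂_n, η̂_n(θ̂_n)) = o_p(n^{-1/2})
    (hroot : oP P (fun n ω => Real.sqrt n * ‖Ψn n ω (θhat n ω) (ηhat n ω (θhat n ω))‖)
      (fun _ => 1))
    -- (i) stochastic equicontinuity
    (hse : oP P (fun n ω =>
        ‖(Real.sqrt n) • (Ψn n ω (θhat n ω) (ηhat n ω (θhat n ω)) -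
              Ψ (θhat n ω) (ηhat n ω (θhat n ω))) -
          (Real.sqrt n) • (Ψn n ω θ0 (η0 θ0) - Ψ θ0 (η0 θ0))‖ /
          (1 + Real.sqrt n * ‖Ψn n ω (θhat n ω) (ηhat n ω (θhat n ω))‖ +
            Real.sqrt n * ‖Ψ (θhat n ω) (ηhat n ω (θhat n ω))‖)) (fun _ => 1))
    -- (ii) √n Ψ_n(θ0, η0(θ0)) = O_p(1)
    (htight : OP P (fun n ω => Real.sqrt n * ‖Ψn n ω θ0 (η0 θ0)‖) (fun _ => 1))
    (Θ0 : Set (Euc d)) (hΘ0sub : Θ0 ⊆ Θ) (hΘ0nbhd : Θ0 ∈ nhdsWithin θ0 Θ)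
    (H0 : Set (Euc d → E)) (hη0H0 : η0 ∈ H0) (hηhatH0 : ∀ n ω, ηhat n ω ∈ H0)
    -- members of H0 are continuously differentiable in θ on Θ0 with uniformly bounded derivatives
    (Dη : (Euc d → E) → Euc d → (Euc d →L[ℝ] E))
    (hDη : ∀ η ∈ H0, ∀ θ ∈ Θ0, HasFDerivWithinAt η (Dη η θ) Θ0 θ)
    (hDηcont : ∀ η ∈ H0, ContinuousOn (Dη η) Θ0)
    (hDηbdd : ∃ K : ℝ, ∀ η ∈ H0, ∀ θ ∈ Θ0, ‖Dη η θ‖ ≤ K)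
    -- θ0 the unique zero of θ ↦ Ψ(θ, η0(θ)) on Θ
    (huniq : ∀ θ ∈ Θ, Ψ θ (η0 θ) = 0 → θ = θ0)
    -- consistency of θ̂_n
    (hcons : oP P (fun n ω => ‖θhat n ω - θ0‖) (fun _ => 1))
    -- ‖η̂_n − η0‖ = O_p(n^{-β}), 0 < β ≤ 1/2
    (β : ℝ) (hβpos : 0 < β) (hβle : β ≤ 1 / 2)
    (hηrate : OP P (fun n ω => ⨆ θ : Θ, ‖ηhat n ω θ - η0 θ‖) (fun n => (n : ℝ) ^ (-β)))
    -- (iii) smoothness: derivatives Ψ̇₁, Ψ̇₂ and nonsingular A = −Ψ̇₁ − Ψ̇₂ ∘ η̇₀(θ0)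
    (Ψdot1 : Euc d →L[ℝ] Euc d) (Ψdot2 : E →L[ℝ] Euc d)
    (A : Euc d ≃L[ℝ] Euc d)
    (hA : ∀ v : Euc d, A v = -(Ψdot1 v) - Ψdot2 (Dη η0 θ0 v))
    (hsmooth :
      (β = 1 / 2 ∧ ∀ ε : ℝ, 0 < ε → ∃ δ : ℝ, 0 < δ ∧ ∀ θ ∈ Θ0, ∀ η ∈ H0,
          ‖θ - θ0‖ < δ → (⨆ θ' : Θ, ‖η θ' - η0 θ'‖) < δ →
          ‖Ψ θ (η θ) - Ψ θ0 (η0 θ0) -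
              (Ψdot1 (θ - θ0) + Ψdot2 (Dη η0 θ0 (θ - θ0)) + Ψdot2 (η θ0 - η0 θ0))‖ ≤
            ε * ‖θ - θ0‖ + ε * (⨆ θ' : Θ, ‖η θ' - η0 θ'‖)) ∨
      (β < 1 / 2 ∧ ∃ α : ℝ, 1 < α ∧ 1 / 2 < α * β ∧ ∃ Cs : ℝ, ∀ ε : ℝ, 0 < ε →
          ∃ δ : ℝ, 0 < δ ∧ ∀ θ ∈ Θ0, ∀ η ∈ H0,
          ‖θ - θ0‖ < δ → (⨆ θ' : Θ, ‖η θ' - η0 θ'‖) < δ →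
          ‖Ψ θ (η θ) - Ψ θ0 (η0 θ0) -
              (Ψdot1 (θ - θ0) + Ψdot2 (Dη η0 θ0 (θ - θ0)) + Ψdot2 (η θ0 - η0 θ0))‖ ≤
            ε * ‖θ - θ0‖ + Cs * (⨆ θ' : Θ, ‖η θ' - η0 θ'‖) ^ α))
    -- (iv)
    (hiv : OP P (fun n ω => Real.sqrt n * ‖Ψdot2 (ηhat n ω θ0 - η0 θ0)‖) (fun _ => 1))
 :
    OP P (fun n ω => Real.sqrt n * ‖θhat n ω - θ0‖) (fun _ => 1) := by
  classical
  -- constants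
  set C0 : ℝ := ‖(A.symm : Euc d →L[ℝ] Euc d)‖ + 1 with hC0def
  have hC0pos : (0:ℝ) < C0 := by positivity
  set ε0 : ℝ := 1 / (2 * C0) with hε0def
  have hε0pos : (0:ℝ) < ε0 := by positivity
  have hCε : C0 * ε0 = 1 / 2 := by
    rw [hε0def]; field_simp
  -- unified smoothness statement
  obtain ⟨α, C', δ, hα1, hαβ, hC'0, hδpos, hkey⟩ :
      ∃ α C' δ : ℝ, 1 ≤ α ∧ 1/2 ≤ α * β ∧ 0 ≤ C' ∧ 0 < δ ∧
        ∀ θ ∈ Θ0, ∀ η ∈ H0, ‖θ - θ0‖ < δ → (⨆ θ' : Θ, ‖η θ' - η0 θ'‖) < δ →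
          ‖Ψ θ (η θ) - Ψ θ0 (η0 θ0) -
              (Ψdot1 (θ - θ0) + Ψdot2 (Dη η0 θ0 (θ - θ0)) + Ψdot2 (η θ0 - η0 θ0))‖ ≤
            ε0 * ‖θ - θ0‖ + C' * (⨆ θ' : Θ, ‖η θ' - η0 θ'‖) ^ α := by
    rcases hsmooth with ⟨hβ, hsm⟩ | ⟨hβ, α, hα, hαβ, Cs, hsm⟩
    · obtain ⟨δ, hδ, hsm⟩ := hsm ε0 hε0pos
      refine ⟨1, ε0, δ, le_refl 1, by rw [hβ]; norm_num, hε0pos.le, hδ, ?_⟩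
      intro θ hθ η hη h1 h2
      have := hsm θ hθ η hη h1 h2
      rwa [Real.rpow_one]
    · obtain ⟨δ, hδ, hsm⟩ := hsm ε0 hε0pos
      refine ⟨α, |Cs|, δ, hα.le, hαβ.le, abs_nonneg _, hδ, ?_⟩
      intro θ hθ η hη h1 h2
      refine (hsm θ hθ η hη h1 h2).trans ?_
      have h3 : (0:ℝ) ≤ (⨆ θ' : Θ, ‖η θ' - η0 θ'‖) ^ α :=
        Real.rpow_nonneg (Real.iSup_nonneg fun _ => norm_nonneg _) _
      have h4 := mul_le_mul_of_nonneg_right (le_abs_self Cs) h3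
      linarith only [h4]
  -- neighborhood radius
  rw [Metric.mem_nhdsWithin_iff] at hΘ0nbhd
  obtain ⟨r, hrpos, hball⟩ := hΘ0nbhd
  set δ2 : ℝ := min δ r with hδ2def
  have hδ2pos : 0 < δ2 := lt_min hδpos hrpos
  -- start the OP proof
  intro ε hε
  have hε6 : (0:ℝ) < ε / 6 := by linarith only [hε]
  have hε6' : (0:ℝ≥0∞) < ENNReal.ofReal (ε/6) := ENNReal.ofReal_pos.mpr hε6
  obtain ⟨MT, hMT⟩ := htight (ε/6) hε6
  obtain ⟨MS, hMS⟩ := hηrate (ε/6) hε6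
  obtain ⟨MV, hMV⟩ := hiv (ε/6) hε6
  set MS' : ℝ := max MS 0 with hMS'def
  have hMS'0 : (0:ℝ) ≤ MS' := le_max_right _ _
  have hE1 := (hse (1/2) (by norm_num)).eventually_lt_const hε6'
  have hE2 := (hroot 1 one_pos).eventually_lt_const hε6'
  have hE4 := (hcons δ2 hδ2pos).eventually_lt_const hε6'
  have hδn : ∀ᶠ n : ℕ in atTop, MS' * (n:ℝ) ^ (-β) < δ := by
    have h0 : Tendsto (fun n : ℕ => MS' * (n:ℝ) ^ (-β)) atTop (nhds 0) := by
      have := ((tendsto_rpow_neg_atTop hβpos).comp tendsto_natCast_atTop_atTop).const_mul MS'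
      simpa using this
    exact h0.eventually_lt_const hδpos
  have hn1 : ∀ᶠ n : ℕ in atTop, 1 ≤ n := eventually_ge_atTop 1
  refine ⟨2*C0*(4+2*MT) + 2*C0*MV + 2*C0*C'*MS' ^ α, ?_⟩
  filter_upwards [hE1, hE2, hMT, hE4, hMS, hMV, hδn, hn1] with n hB1 hB2 hB3 hB4 hB5 hB6 hδn' hn
  set M : ℝ := 2*C0*(4+2*MT) + 2*C0*MV + 2*C0*C'*MS' ^ α with hMdef
  set sn : ℝ := Real.sqrt n with hsndef
  have hsn : (0:ℝ) ≤ sn := Real.sqrt_nonneg _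
  -- the six bad events
  set E1 : Set Ω := {ω | 1/2 * (1:ℝ) ≤
      ‖sn • (Ψn n ω (θhat n ω) (ηhat n ω (θhat n ω)) - Ψ (θhat n ω) (ηhat n ω (θhat n ω))) -
          sn • (Ψn n ω θ0 (η0 θ0) - Ψ θ0 (η0 θ0))‖ /
        (1 + sn * ‖Ψn n ω (θhat n ω) (ηhat n ω (θhat n ω))‖ +
          sn * ‖Ψ (θhat n ω) (ηhat n ω (θhat n ω))‖)} with hE1def
  set E2 : Set Ω := {ω | 1 * (1:ℝ) ≤ sn * ‖Ψn n ω (θhat n ω) (ηhat n ω (θhat n ω))‖} with hE2def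
  set E3 : Set Ω := {ω | MT * (1:ℝ) < sn * ‖Ψn n ω θ0 (η0 θ0)‖} with hE3def
  set E4 : Set Ω := {ω | δ2 * (1:ℝ) ≤ ‖θhat n ω - θ0‖} with hE4def
  set E5 : Set Ω := {ω | MS * (n:ℝ) ^ (-β) < ⨆ θ : Θ, ‖ηhat n ω θ - η0 θ‖} with hE5def
  set E6 : Set Ω := {ω | MV * (1:ℝ) < sn * ‖Ψdot2 (ηhat n ω θ0 - η0 θ0)‖} with hE6def
  have hsub : {ω | M * (1:ℝ) < sn * ‖θhat n ω - θ0‖} ⊆ E1 ∪ E2 ∪ E3 ∪ E4 ∪ E5 ∪ E6 := by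
    intro ω hω
    simp only [Set.mem_setOf_eq] at hω
    by_contra hcon
    simp only [hE1def, hE2def, hE3def, hE4def, hE5def, hE6def, Set.mem_union,
      Set.mem_setOf_eq, not_or, not_le, not_lt] at hcon
    obtain ⟨⟨⟨⟨⟨hR, hZ⟩, hT⟩, hD⟩, hS⟩, hV⟩ := hcon
    -- abbreviations
    set a : Euc d := Ψn n ω (θhat n ω) (ηhat n ω (θhat n ω)) with hadef
    set b : Euc d := Ψ (θhat n ω) (ηhat n ω (θhat n ω)) with hbdef
    set c : Euc d := Ψn n ω θ0 (η0 θ0) with hcdef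
    set S : ℝ := ⨆ θ : Θ, ‖ηhat n ω θ - η0 θ‖ with hSdef
    set Y : Euc d := Ψdot2 (ηhat n ω θ0 - η0 θ0) with hYdef
    have hnormsmul : ∀ x : Euc d, ‖sn • x‖ = sn * ‖x‖ := fun x => by
      rw [norm_smul, Real.norm_eq_abs, abs_of_nonneg hsn]
    -- Step 1 : sn * ‖b‖ ≤ 4 + 2*MT
    have hden : (0:ℝ) < 1 + sn * ‖a‖ + sn * ‖b‖ := by positivity
    have hNlt : ‖sn • (a - b) - sn • (c - Ψ θ0 (η0 θ0))‖ <
        (1 + sn * ‖a‖ + sn * ‖b‖) / 2 := by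
      have h1 : ‖sn • (a - b) - sn • (c - Ψ θ0 (η0 θ0))‖ /
          (1 + sn * ‖a‖ + sn * ‖b‖) < 1/2 := by
        linarith only [hR]
      have h2 := (div_lt_iff₀ hden).mp h1
      linarith only [h2]
    have hid1 : sn • b = sn • a - (sn • (a - b) - sn • (c - Ψ θ0 (η0 θ0)))
        - sn • (c - Ψ θ0 (η0 θ0)) := by
      module
    have hWle : sn * ‖b‖ ≤ sn * ‖a‖ +
        ‖sn • (a - b) - sn • (c - Ψ θ0 (η0 θ0))‖ + sn * ‖c‖ := by
      have t1 : ‖sn • b‖ ≤ ‖sn • a - (sn • (a - b) - sn • (c - Ψ θ0 (η0 θ0)))‖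
          + ‖sn • (c - Ψ θ0 (η0 θ0))‖ := by
        rw [hid1]; exact norm_sub_le _ _
      have t2 : ‖sn • a - (sn • (a - b) - sn • (c - Ψ θ0 (η0 θ0)))‖ ≤
          ‖sn • a‖ + ‖sn • (a - b) - sn • (c - Ψ θ0 (η0 θ0))‖ := norm_sub_le _ _
      have t3 : ‖sn • (c - Ψ θ0 (η0 θ0))‖ = sn * ‖c‖ := by
        rw [hzero, sub_zero, hnormsmul]
      rw [hnormsmul] at t1
      rw [hnormsmul] at t2
      linarith only [t1, t2, t3]
    have hZ' : sn * ‖a‖ < 1 := by linarith only [hZ]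
    have hT' : sn * ‖c‖ ≤ MT := by linarith only [hT]
    have hW : sn * ‖b‖ ≤ 4 + 2 * MT := by linarith only [hNlt, hWle, hZ', hT']
    -- Step 2 : smoothness
    have hS0 : (0:ℝ) ≤ S := Real.iSup_nonneg fun _ => norm_nonneg _
    have hrpow0 : (0:ℝ) ≤ (n:ℝ) ^ (-β) := Real.rpow_nonneg (Nat.cast_nonneg n) _
    have hSle : S ≤ MS' * (n:ℝ) ^ (-β) :=
      hS.trans (mul_le_mul_of_nonneg_right (le_max_left _ _) hrpow0)
    have hSδ : S < δ := lt_of_le_of_lt hSle hδn'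
    have hD' : ‖θhat n ω - θ0‖ < δ2 := by linarith only [hD]
    have hDδ : ‖θhat n ω - θ0‖ < δ := lt_of_lt_of_le hD' (min_le_left _ _)
    have hθΘ0 : θhat n ω ∈ Θ0 := by
      refine hball ⟨?_, hθhatΘ n ω⟩
      rw [Metric.mem_ball, dist_eq_norm]
      exact lt_of_lt_of_le hD' (min_le_right _ _)
    have hrem := hkey (θhat n ω) hθΘ0 (ηhat n ω) (hηhatH0 n ω) hDδ hSδ
    rw [hzero, sub_zero] at hrem
    set v : Euc d := θhat n ω - θ0 with hvdef
    have h1 : Ψdot1 v + Ψdot2 (Dη η0 θ0 v) = -(A v) := by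
      rw [hA v]; abel
    have hid2 : (A v : Euc d) =
        (b - (Ψdot1 v + Ψdot2 (Dη η0 θ0 v) + Y)) - b + Y := by
      rw [h1]; abel
    have hAvle : ‖(A v : Euc d)‖ ≤
        ‖b - (Ψdot1 v + Ψdot2 (Dη η0 θ0 v) + Y)‖ + ‖b‖ + ‖Y‖ := by
      rw [hid2]
      calc ‖(b - (Ψdot1 v + Ψdot2 (Dη η0 θ0 v) + Y)) - b + Y‖
          ≤ ‖(b - (Ψdot1 v + Ψdot2 (Dη η0 θ0 v) + Y)) - b‖ + ‖Y‖ := norm_add_le _ _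
        _ ≤ ‖b - (Ψdot1 v + Ψdot2 (Dη η0 θ0 v) + Y)‖ + ‖b‖ + ‖Y‖ := by
            have h3 := norm_sub_le (b - (Ψdot1 v + Ψdot2 (Dη η0 θ0 v) + Y)) b
            linarith only [h3]
    have hAvle2 : ‖(A v : Euc d)‖ ≤ ‖b‖ + ‖Y‖ + (ε0 * ‖v‖ + C' * S ^ α) := by
      linarith only [hrem, hAvle]
    have hDle : ‖v‖ ≤ C0 * ‖(A v : Euc d)‖ := by
      have hop := ContinuousLinearMap.le_opNorm (A.symm : Euc d →L[ℝ] Euc d) (A v)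
      rw [ContinuousLinearEquiv.coe_coe, A.symm_apply_apply] at hop
      have hle : ‖(A.symm : Euc d →L[ℝ] Euc d)‖ ≤ C0 := by rw [hC0def]; linarith only []
      exact hop.trans (mul_le_mul_of_nonneg_right hle (norm_nonneg _))
    have hDC : ‖v‖ ≤ 2*C0*‖b‖ + 2*C0*‖Y‖ + 2*C0*(C' * S ^ α) := by
      have h2 : ‖v‖ ≤ C0 * (‖b‖ + ‖Y‖ + (ε0 * ‖v‖ + C' * S ^ α)) :=
        hDle.trans (mul_le_mul_of_nonneg_left hAvle2 hC0pos.le)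
      have h3 : C0 * (‖b‖ + ‖Y‖ + (ε0 * ‖v‖ + C' * S ^ α)) =
          C0*‖b‖ + C0*‖Y‖ + (C0*ε0)*‖v‖ + C0*(C' * S ^ α) := by ring
      rw [h3, hCε] at h2
      ring_nf at h2 ⊢
      linarith only [h2]
    -- multiply by sn
    have hmul : sn * ‖v‖ ≤ 2*C0*(sn*‖b‖) + 2*C0*(sn*‖Y‖) + 2*C0*C'*(sn * S ^ α) := by
      have h4 := mul_le_mul_of_nonneg_left hDC hsn
      have h5 : sn * (2*C0*‖b‖ + 2*C0*‖Y‖ + 2*C0*(C' * S ^ α)) =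
          2*C0*(sn*‖b‖) + 2*C0*(sn*‖Y‖) + 2*C0*C'*(sn * S ^ α) := by ring
      linarith only [h4, h5]
    -- bound sn * S^α
    have hncast : (1:ℝ) ≤ (n:ℝ) := by exact_mod_cast hn
    have hnpos : (0:ℝ) < (n:ℝ) := by linarith only [hncast]
    have hSα : sn * S ^ α ≤ MS' ^ α := by
      have hs2 : S ^ α ≤ (MS' * (n:ℝ) ^ (-β)) ^ α :=
        Real.rpow_le_rpow hS0 hSle (by linarith only [hα1])
      have hs3 : (MS' * (n:ℝ) ^ (-β)) ^ α = MS' ^ α * (n:ℝ) ^ (-β * α) := by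
        rw [Real.mul_rpow hMS'0 hrpow0, Real.rpow_mul hnpos.le]
      have hs4 : sn * S ^ α ≤ MS' ^ α * ((n:ℝ) ^ ((1:ℝ)/2) * (n:ℝ) ^ (-β * α)) := by
        have h4 := mul_le_mul_of_nonneg_left (hs2.trans_eq hs3) hsn
        rw [hsndef, Real.sqrt_eq_rpow] at h4 ⊢
        rw [show MS' ^ α * ((n:ℝ) ^ ((1:ℝ)/2) * (n:ℝ) ^ (-β * α)) =
            (n:ℝ) ^ ((1:ℝ)/2) * (MS' ^ α * (n:ℝ) ^ (-β * α)) from by ring]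
        exact h4
      have hs5 : (n:ℝ) ^ ((1:ℝ)/2) * (n:ℝ) ^ (-β * α) = (n:ℝ) ^ ((1:ℝ)/2 + (-β * α)) :=
        (Real.rpow_add hnpos _ _).symm
      have hs6 : (n:ℝ) ^ ((1:ℝ)/2 + (-β * α)) ≤ 1 := by
        apply Real.rpow_le_one_of_one_le_of_nonpos hncast
        have : -(β * α) = -(α * β) := by ring
        linarith only [hαβ, this]
      have hs7 : MS' ^ α * ((n:ℝ) ^ ((1:ℝ)/2) * (n:ℝ) ^ (-β * α)) ≤ MS' ^ α := by
        rw [hs5]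
        calc MS' ^ α * (n:ℝ) ^ ((1:ℝ)/2 + (-β * α)) ≤ MS' ^ α * 1 :=
              mul_le_mul_of_nonneg_left hs6 (Real.rpow_nonneg hMS'0 _)
          _ = MS' ^ α := mul_one _
      linarith only [hs4, hs7]
    -- conclude
    have hVle : sn * ‖Y‖ ≤ MV := by linarith only [hV]
    have hfinal : sn * ‖v‖ ≤ M := by
      rw [hMdef]
      have c1 : 2*C0*(sn*‖b‖) ≤ 2*C0*(4+2*MT) :=
        mul_le_mul_of_nonneg_left hW (by linarith only [hC0pos])
      have c2 : 2*C0*(sn*‖Y‖) ≤ 2*C0*MV :=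
        mul_le_mul_of_nonneg_left hVle (by linarith only [hC0pos])
      have c3 : 2*C0*C'*(sn * S ^ α) ≤ 2*C0*C'*MS' ^ α :=
        mul_le_mul_of_nonneg_left hSα
          (mul_nonneg (by linarith only [hC0pos]) hC'0)
      linarith only [hmul, c1, c2, c3]
    rw [hvdef] at hfinal
    rw [mul_one] at hω
    linarith only [hω, hfinal]
  -- probability bookkeeping
  have hε6'' : (0:ℝ) ≤ ε / 6 := hε6.le
  have hsum : ENNReal.ofReal (ε/6) + ENNReal.ofReal (ε/6) + ENNReal.ofReal (ε/6) +
      ENNReal.ofReal (ε/6) + ENNReal.ofReal (ε/6) + ENNReal.ofReal (ε/6) =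
      ENNReal.ofReal ε := by
    rw [← ENNReal.ofReal_add hε6'' hε6'', ← ENNReal.ofReal_add (by positivity) hε6'',
      ← ENNReal.ofReal_add (by positivity) hε6'', ← ENNReal.ofReal_add (by positivity) hε6'',
      ← ENNReal.ofReal_add (by positivity) hε6'']
    congr 1
    ring
  have hPE1 : P E1 ≤ ENNReal.ofReal (ε/6) := hB1.le
  have hPE2 : P E2 ≤ ENNReal.ofReal (ε/6) := hB2.le
  have hPE3 : P E3 ≤ ENNReal.ofReal (ε/6) := hB3
  have hPE4 : P E4 ≤ ENNReal.ofReal (ε/6) := hB4.le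
  have hPE5 : P E5 ≤ ENNReal.ofReal (ε/6) := hB5
  have hPE6 : P E6 ≤ ENNReal.ofReal (ε/6) := hB6
  calc P {ω | M * (1:ℝ) < sn * ‖θhat n ω - θ0‖}
      ≤ P (E1 ∪ E2 ∪ E3 ∪ E4 ∪ E5 ∪ E6) := measure_mono hsub
    _ ≤ P (E1 ∪ E2 ∪ E3 ∪ E4 ∪ E5) + P E6 := measure_union_le _ _
    _ ≤ (P (E1 ∪ E2 ∪ E3 ∪ E4) + P E5) + P E6 :=
        add_le_add_left (measure_union_le _ _) _
    _ ≤ ((P (E1 ∪ E2 ∪ E3) + P E4) + P E5) + P E6 :=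
        add_le_add_left (add_le_add_left (measure_union_le _ _) _) _
    _ ≤ (((P (E1 ∪ E2) + P E3) + P E4) + P E5) + P E6 :=
        add_le_add_left (add_le_add_left (add_le_add_left (measure_union_le _ _) _) _) _
    _ ≤ ((((P E1 + P E2) + P E3) + P E4) + P E5) + P E6 :=
        add_le_add_left (add_le_add_left (add_le_add_left
          (add_le_add_left (measure_union_le _ _) _) _) _) _
    _ ≤ ENNReal.ofReal (ε/6) + ENNReal.ofReal (ε/6) + ENNReal.ofReal (ε/6) +
        ENNReal.ofReal (ε/6) + ENNReal.ofReal (ε/6) + ENNReal.ofReal (ε/6) := by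
        gcongr
    _ = ENNReal.ofReal ε := hsum
end
end

section
/- Asymptotic representation of the Z-estimator with bundled parameters (Lemma 2.2). Assume θ̂_n is a consistent estimator of θ0 (θ̂_n → θ0 in probability) with Ψ_n(θ̂_n, η̂_n(θ̂_n)) = o_p(n^{-1/2}), θ0 is the unique zero of θ ↦ Ψ(θ, η0(θ)) on Θ, ‖η̂_n − η0‖ = O_p(n^{-β}) for some β ∈ (0, 1/2], and conditions (i)–(iv) hold: (i) stochastic equicontinuity: |√n(Ψ_n − Ψ)(θ̂_n, η̂_n(θ̂_n)) − √n(Ψ_n − Ψ)(θ0, η0(θ0))| / (1 + √n|Ψ_n(θ̂_n, η̂_n(θ̂_n))| + √n|Ψ(θ̂_n, η̂_n(θ̂_n))|) = o_p(1); (ii) √n Ψ_n(θ0, η0(θ0)) = O_p(1); (iii) smoothness: there exist a d×d matrix Ψ̇_1 and a continuous linear map Ψ̇_2 : E → ℝ^d such that, for (θ, η) ∈ Θ0 × H0 as θ → θ0 and ‖η − η0‖ → 0, |Ψ(θ, η(θ)) − Ψ(θ0, η0(θ0)) − (Ψ̇_1 + Ψ̇_2 ∘ η̇_0(θ0))(θ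 − θ0) − Ψ̇_2[(η − η0)(θ0)]| = o(|θ − θ0|) + o(‖η − η0‖) if β = 1/2, or = o(|θ − θ0|) + O(‖η − η0‖^α) for some α > 1 with αβ > 1/2 if 0 < β < 1/2, and the matrix A = −Ψ̇_1 − Ψ̇_2 ∘ η̇_0(θ0) is nonsingular; (iv) √n Ψ̇_2[(η̂_n − η0)(θ0)] = O_p(1). Then √n(θ̂_n − θ0) = A^{-1} √n { (Ψ_n − Ψ)(θ0, η0(θ0)) + Ψ̇_2[(η̂_n − η0)(θ0)] } + o_p(1). -/
open MeasureTheory Filter Topology ProbabilityTheory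
open scoped ENNReal NNReal InnerProductSpace

noncomputable section

private lemma zest_norm_smul {F : Type*} [NormedAddCommGroup F] [NormedSpace ℝ F]
    {s : ℝ} (hs : 0 ≤ s) (v : F) : ‖s • v‖ = s * ‖v‖ := by
  rw [norm_smul, Real.norm_eq_abs, abs_of_nonneg hs]

set_option maxHeartbeats 1000000 in
private lemma zest_core {d : ℕ} (A : Euc d ≃L[ℝ] Euc d) {N s cb r2 M1' M3' εs ε φs : ℝ}
    (hN : ∀ y : Euc d, ‖A.symm y‖ ≤ N * ‖y‖)
    (hN1 : 1 ≤ N) (hs0 : 0 ≤ s) (hε : 0 < ε)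
    (hM1'1 : 1 ≤ M1') (hM3'1 : 1 ≤ M3')
    (hcb1 : cb ≤ 1) (hcbε : cb ≤ ε/(8*N)) (hcb0 : 0 < cb)
    (hr20 : 0 ≤ r2) (hr2h : r2 ≤ 1/2) (hr2ε : r2 ≤ ε/(8*N*(2+(6+2*M1'))))
    (hεs0 : 0 ≤ εs) (hεsN : εs ≤ 1/(2*N))
    (hεsT : εs ≤ ε/(8*N*((2*N*((6+2*M1') + M3' + 1))+1)))
    (hφs : s * φs ≤ cb)
    (a1 a2 b1 D2 u : Euc d)
    (h1 : s*‖a1‖ < cb)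
    (hD : ‖s•(a1 - a2) - s•b1‖ ≤ r2*(1 + s*‖a1‖ + s*‖a2‖))
    (hb1 : s*‖b1‖ ≤ M1')
    (hD2 : s*‖D2‖ ≤ M3')
    (hrem : ‖a2 + A u - D2‖ ≤ εs*‖u‖ + φs) :
    ‖s•u - A.symm (s•(b1 + D2))‖ < ε := by
  set Sb : ℝ := 6 + 2*M1' with hSbdef
  set Tb : ℝ := 2*N*(Sb + M3' + 1) with hTbdef
  clear_value Sb Tb
  have hN0 : (0:ℝ) < N := by linarith
  have hSb0 : (0:ℝ) < Sb := by rw [hSbdef]; linarith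
  have hTb0 : (0:ℝ) < Tb := by rw [hTbdef]; nlinarith
  set X := s*‖a2‖ with hX
  clear_value X
  have hXnn : 0 ≤ X := by rw [hX]; exact mul_nonneg hs0 (norm_nonneg _)
  have hp0 : 0 ≤ s*‖a1‖ := mul_nonneg hs0 (norm_nonneg _)
  have hp1 : s*‖a1‖ ≤ 1 := le_trans h1.le hcb1
  -- bound on X = s‖a2‖
  have hXle : X ≤ s*‖a1‖ + ‖s•(a1-a2) - s•b1‖ + s*‖b1‖ := by
    have hid : s•a2 = s•a1 - (s•(a1-a2) - s•b1) - s•b1 := by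
      simp only [smul_sub]; abel
    calc X = ‖s•a2‖ := by rw [hX, zest_norm_smul hs0]
    _ = ‖s•a1 - (s•(a1-a2) - s•b1) - s•b1‖ := by rw [← hid]
    _ ≤ ‖s•a1 - (s•(a1-a2) - s•b1)‖ + ‖s•b1‖ := norm_sub_le _ _
    _ ≤ ‖s•a1‖ + ‖s•(a1-a2) - s•b1‖ + ‖s•b1‖ := by
        linarith [norm_sub_le (s•a1) (s•(a1-a2) - s•b1)]
    _ = s*‖a1‖ + ‖s•(a1-a2) - s•b1‖ + s*‖b1‖ := by
        rw [zest_norm_smul hs0, zest_norm_smul hs0]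
  have hXb : X ≤ Sb := by
    rw [hSbdef]
    nlinarith [hD, hb1, hXle]
  -- bound on T = s‖u‖
  set T := s*‖u‖ with hT
  clear_value T
  have hTnn : 0 ≤ T := by rw [hT]; exact mul_nonneg hs0 (norm_nonneg _)
  have hid2 : A (s•u) = -(s•a2) + s•D2 + s•(a2 + A u - D2) := by
    rw [_root_.map_smul]
    simp only [smul_add, smul_sub, smul_neg]
    abel
  have n3 : ‖s•(a2 + A u - D2)‖ ≤ εs*T + cb := by
    rw [zest_norm_smul hs0]
    calc s*‖a2 + A u - D2‖ ≤ s*(εs*‖u‖ + φs) := mul_le_mul_of_nonneg_left hrem hs0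
    _ = εs*(s*‖u‖) + s*φs := by ring
    _ ≤ εs*T + cb := by rw [hT]; linarith
  have hnorm2 : ‖A (s•u)‖ ≤ X + M3' + (εs*T + cb) := by
    rw [hid2]
    have n1 : ‖-(s•a2)‖ = X := by rw [norm_neg, zest_norm_smul hs0, hX]
    have n2 : ‖s•D2‖ ≤ M3' := by rw [zest_norm_smul hs0]; exact hD2
    calc ‖-(s•a2) + s•D2 + s•(a2+A u-D2)‖
        ≤ ‖-(s•a2) + s•D2‖ + ‖s•(a2+A u-D2)‖ := norm_add_le _ _
    _ ≤ ‖-(s•a2)‖ + ‖s•D2‖ + ‖s•(a2+A u-D2)‖ := by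
        linarith [norm_add_le (-(s•a2)) (s•D2)]
    _ ≤ X + M3' + (εs*T + cb) := by rw [n1]; linarith
  have hTle : T ≤ N*(X + M3' + (εs*T + cb)) := by
    have e2 : ‖s•u‖ = ‖A.symm (A (s•u))‖ := by rw [A.symm_apply_apply]
    calc T = ‖s•u‖ := by rw [hT, zest_norm_smul hs0]
    _ = ‖A.symm (A (s•u))‖ := e2
    _ ≤ N*‖A (s•u)‖ := hN _
    _ ≤ N*(X + M3' + (εs*T + cb)) := mul_le_mul_of_nonneg_left hnorm2 hN0.le
  have hNεs : N*εs ≤ 1/2 := by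
    calc N*εs ≤ N*(1/(2*N)) := mul_le_mul_of_nonneg_left hεsN hN0.le
    _ = 1/2 := by field_simp
  have hTbd : T ≤ Tb := by
    have h0 : N*(X + M3' + (εs*T + cb)) = N*X + N*M3' + (N*εs)*T + N*cb := by ring
    rw [h0] at hTle
    have f1 : (N*εs)*T ≤ (1/2)*T := mul_le_mul_of_nonneg_right hNεs hTnn
    have f2 : N*X ≤ N*Sb := mul_le_mul_of_nonneg_left hXb hN0.le
    have f3 : N*cb ≤ N*1 := mul_le_mul_of_nonneg_left hcb1 hN0.le
    rw [hTbdef]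
    linarith
  -- final identity and bound
  have hidV : s•u - A.symm (s•(b1 + D2)) =
      A.symm (-(s•a1) + (s•(a1-a2) - s•b1) + s•(a2 + A u - D2)) := by
    have e0 : s•u = A.symm (A (s•u)) := (A.symm_apply_apply _).symm
    rw [e0, ← map_sub]
    congr 1
    rw [hid2]
    simp only [smul_add, smul_sub, smul_neg]
    abel
  have hVle : ‖s•u - A.symm (s•(b1+D2))‖ ≤
      N*(s*‖a1‖ + r2*(1 + s*‖a1‖ + X) + (εs*T + cb)) := by
    rw [hidV]
    refine (hN _).trans (mul_le_mul_of_nonneg_left ?_ hN0.le)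
    have n1 : ‖-(s•a1)‖ = s*‖a1‖ := by rw [norm_neg, zest_norm_smul hs0]
    calc ‖-(s•a1) + (s•(a1-a2) - s•b1) + s•(a2+A u-D2)‖
        ≤ ‖-(s•a1) + (s•(a1-a2) - s•b1)‖ + ‖s•(a2+A u-D2)‖ := norm_add_le _ _
    _ ≤ ‖-(s•a1)‖ + ‖s•(a1-a2) - s•b1‖ + ‖s•(a2+A u-D2)‖ := by
        linarith [norm_add_le (-(s•a1)) (s•(a1-a2) - s•b1)]
    _ ≤ s*‖a1‖ + r2*(1 + s*‖a1‖ + X) + (εs*T + cb) := by rw [n1]; linarith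
  have h2Sb : (0:ℝ) < 2 + Sb := by linarith
  have e1 : N*(s*‖a1‖) ≤ ε/8 := by
    have h2 : N*(s*‖a1‖) ≤ N*cb := mul_le_mul_of_nonneg_left h1.le hN0.le
    have h3 : N*cb ≤ N*(ε/(8*N)) := mul_le_mul_of_nonneg_left hcbε hN0.le
    have h4 : N*(ε/(8*N)) = ε/8 := by field_simp
    linarith
  have e4 : N*cb ≤ ε/8 := by
    have h3 : N*cb ≤ N*(ε/(8*N)) := mul_le_mul_of_nonneg_left hcbε hN0.le
    have h4 : N*(ε/(8*N)) = ε/8 := by field_simp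
    linarith
  have e2 : N*(r2*(1 + s*‖a1‖ + X)) ≤ ε/8 := by
    have hb : 1 + s*‖a1‖ + X ≤ 2 + Sb := by linarith
    have h2 : r2*(1+s*‖a1‖+X) ≤ r2*(2+Sb) := mul_le_mul_of_nonneg_left hb hr20
    have hr2ε' : r2 ≤ ε/(8*N*(2+Sb)) := hr2ε
    have h3 : N*(r2*(2+Sb)) ≤ N*((ε/(8*N*(2+Sb)))*(2+Sb)) :=
      mul_le_mul_of_nonneg_left (mul_le_mul_of_nonneg_right hr2ε' h2Sb.le) hN0.le
    have h4 : N*((ε/(8*N*(2+Sb)))*(2+Sb)) = ε/8 := by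
      field_simp
    have h5 := mul_le_mul_of_nonneg_left h2 hN0.le
    linarith
  have e3 : N*(εs*T) ≤ ε/8 := by
    have h2 : εs*T ≤ εs*Tb := mul_le_mul_of_nonneg_left hTbd hεs0
    have hεsT' : εs ≤ ε/(8*N*(Tb+1)) := hεsT
    have h3 : N*(εs*Tb) ≤ N*((ε/(8*N*(Tb+1)))*Tb) :=
      mul_le_mul_of_nonneg_left (mul_le_mul_of_nonneg_right hεsT' hTb0.le) hN0.le
    have h4 : N*((ε/(8*N*(Tb+1)))*Tb) ≤ ε/8 := by
      rw [show N*((ε/(8*N*(Tb+1)))*Tb) = ε*Tb/(8*(Tb+1)) from by field_simp]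
      rw [div_le_div_iff₀ (by linarith) (by norm_num)]
      nlinarith
    have h5 := mul_le_mul_of_nonneg_left h2 hN0.le
    linarith
  have expand : N*(s*‖a1‖ + r2*(1 + s*‖a1‖ + X) + (εs*T + cb)) =
      N*(s*‖a1‖) + N*(r2*(1 + s*‖a1‖ + X)) + (N*(εs*T) + N*cb) := by ring
  linarith [hVle]

set_option maxHeartbeats 2000000 in
/-- Lemma 2.2: asymptotic representation of the bundled Z-estimator. -/
theorem asymptotic_representation_of_bundled_Z_estimator
    {d : ℕ} (hd : 1 ≤ d) {E : Type*} [NormedAddCommGroup E] [NormedSpace ℝ E]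
    {Ω : Type*} [MeasurableSpace Ω] (P : Measure Ω) [IsProbabilityMeasure P]
    (Θ : Set (Euc d)) (hΘ : IsCompact Θ)
    (θ0 : Euc d) (hθ0 : θ0 ∈ Θ)
    (Ψn : ℕ → Ω → Euc d → E → Euc d)
    (Ψ : Euc d → E → Euc d)
    (η0 : Euc d → E)
    (hzero : Ψ θ0 (η0 θ0) = 0)
    (θhat : ℕ → Ω → Euc d) (hθhatΘ : ∀ n ω, θhat n ω ∈ Θ)
    (ηhat : ℕ → Ω → Euc d → E)
    -- Ψ_n(θ̂_n, η̂_n(θ̂_n)) = o_p(n^{-1/2})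
    (hroot : oP P (fun n ω => Real.sqrt n * ‖Ψn n ω (θhat n ω) (ηhat n ω (θhat n ω))‖)
      (fun _ => 1))
    -- (i) stochastic equicontinuity
    (hse : oP P (fun n ω =>
        ‖(Real.sqrt n) • (Ψn n ω (θhat n ω) (ηhat n ω (θhat n ω)) -
              Ψ (θhat n ω) (ηhat n ω (θhat n ω))) -
          (Real.sqrt n) • (Ψn n ω θ0 (η0 θ0) - Ψ θ0 (η0 θ0))‖ /
          (1 + Real.sqrt n * ‖Ψn n ω (θhat n ω) (ηhat n ω (θhat n ω))‖ +
            Real.sqrt n * ‖Ψ (θhat n ω) (ηhat n ω (θhat n ω))‖)) (fun _ => 1))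
    -- (ii) √n Ψ_n(θ0, η0(θ0)) = O_p(1)
    (htight : OP P (fun n ω => Real.sqrt n * ‖Ψn n ω θ0 (η0 θ0)‖) (fun _ => 1))
    (Θ0 : Set (Euc d)) (hΘ0sub : Θ0 ⊆ Θ) (hΘ0nbhd : Θ0 ∈ nhdsWithin θ0 Θ)
    (H0 : Set (Euc d → E)) (hη0H0 : η0 ∈ H0) (hηhatH0 : ∀ n ω, ηhat n ω ∈ H0)
    -- members of H0 are continuously differentiable in θ on Θ0 with uniformly bounded derivatives
    (Dη : (Euc d → E) → Euc d → (Euc d →L[ℝ] E))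
    (hDη : ∀ η ∈ H0, ∀ θ ∈ Θ0, HasFDerivWithinAt η (Dη η θ) Θ0 θ)
    (hDηcont : ∀ η ∈ H0, ContinuousOn (Dη η) Θ0)
    (hDηbdd : ∃ K : ℝ, ∀ η ∈ H0, ∀ θ ∈ Θ0, ‖Dη η θ‖ ≤ K)
    -- θ0 the unique zero of θ ↦ Ψ(θ, η0(θ)) on Θ
    (huniq : ∀ θ ∈ Θ, Ψ θ (η0 θ) = 0 → θ = θ0)
    -- consistency of θ̂_n
    (hcons : oP P (fun n ω => ‖θhat n ω - θ0‖) (fun _ => 1))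
    -- ‖η̂_n − η0‖ = O_p(n^{-β}), 0 < β ≤ 1/2
    (β : ℝ) (hβpos : 0 < β) (hβle : β ≤ 1 / 2)
    (hηrate : OP P (fun n ω => ⨆ θ : Θ, ‖ηhat n ω θ - η0 θ‖) (fun n => (n : ℝ) ^ (-β)))
    -- (iii) smoothness: derivatives Ψ̇₁, Ψ̇₂ and nonsingular A = −Ψ̇₁ − Ψ̇₂ ∘ η̇₀(θ0)
    (Ψdot1 : Euc d →L[ℝ] Euc d) (Ψdot2 : E →L[ℝ] Euc d)
    (A : Euc d ≃L[ℝ] Euc d)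
    (hA : ∀ v : Euc d, A v = -(Ψdot1 v) - Ψdot2 (Dη η0 θ0 v))
    (hsmooth :
      (β = 1 / 2 ∧ ∀ ε : ℝ, 0 < ε → ∃ δ : ℝ, 0 < δ ∧ ∀ θ ∈ Θ0, ∀ η ∈ H0,
          ‖θ - θ0‖ < δ → (⨆ θ' : Θ, ‖η θ' - η0 θ'‖) < δ →
          ‖Ψ θ (η θ) - Ψ θ0 (η0 θ0) -
              (Ψdot1 (θ - θ0) + Ψdot2 (Dη η0 θ0 (θ - θ0)) + Ψdot2 (η θ0 - η0 θ0))‖ ≤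
            ε * ‖θ - θ0‖ + ε * (⨆ θ' : Θ, ‖η θ' - η0 θ'‖)) ∨
      (β < 1 / 2 ∧ ∃ α : ℝ, 1 < α ∧ 1 / 2 < α * β ∧ ∃ Cs : ℝ, ∀ ε : ℝ, 0 < ε →
          ∃ δ : ℝ, 0 < δ ∧ ∀ θ ∈ Θ0, ∀ η ∈ H0,
          ‖θ - θ0‖ < δ → (⨆ θ' : Θ, ‖η θ' - η0 θ'‖) < δ →
          ‖Ψ θ (η θ) - Ψ θ0 (η0 θ0) -
              (Ψdot1 (θ - θ0) + Ψdot2 (Dη η0 θ0 (θ - θ0)) + Ψdot2 (η θ0 - η0 θ0))‖ ≤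
            ε * ‖θ - θ0‖ + Cs * (⨆ θ' : Θ, ‖η θ' - η0 θ'‖) ^ α))
    -- (iv)
    (hiv : OP P (fun n ω => Real.sqrt n * ‖Ψdot2 (ηhat n ω θ0 - η0 θ0)‖) (fun _ => 1))
 :
    oP P (fun n ω =>
      ‖(Real.sqrt n) • (θhat n ω - θ0) -
        A.symm ((Real.sqrt n) • ((Ψn n ω θ0 (η0 θ0) - Ψ θ0 (η0 θ0)) +
          Ψdot2 (ηhat n ω θ0 - η0 θ0)))‖) (fun _ => 1) := by
  intro ε hε
  rw [ENNReal.tendsto_atTop_zero]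
  intro ε' hε'
  obtain ⟨δ, hδ, hδε'⟩ : ∃ δ : ℝ, 0 < δ ∧ ENNReal.ofReal δ ≤ ε' := by
    rcases eq_or_ne ε' ⊤ with h | h
    · exact ⟨1, one_pos, by simp [h]⟩
    · exact ⟨ε'.toReal, ENNReal.toReal_pos hε'.ne' h, by rw [ENNReal.ofReal_toReal h]⟩
  have hδ6 : (0:ℝ) < δ/6 := by linarith
  obtain ⟨M1, hM1⟩ := htight (δ/6) hδ6
  obtain ⟨M2, hM2⟩ := hηrate (δ/6) hδ6
  obtain ⟨M3, hM3⟩ := hiv (δ/6) hδ6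
  set M1' : ℝ := max M1 1 with hM1'def
  set M2' : ℝ := max M2 1 with hM2'def
  set M3' : ℝ := max M3 1 with hM3'def
  have hM1'1 : (1:ℝ) ≤ M1' := le_max_right _ _
  have hM2'1 : (1:ℝ) ≤ M2' := le_max_right _ _
  have hM3'1 : (1:ℝ) ≤ M3' := le_max_right _ _
  set N : ℝ := ‖(A.symm : Euc d →L[ℝ] Euc d)‖ + 1 with hNdef
  have hN1 : (1:ℝ) ≤ N := le_add_of_nonneg_left (norm_nonneg _)
  have hN0 : (0:ℝ) < N := lt_of_lt_of_le one_pos hN1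
  have hNle : ∀ y : Euc d, ‖A.symm y‖ ≤ N * ‖y‖ := by
    intro y
    have h := (A.symm : Euc d →L[ℝ] Euc d).le_opNorm y
    rw [ContinuousLinearEquiv.coe_coe] at h
    rw [hNdef]
    nlinarith [norm_nonneg y]
  set cb : ℝ := min 1 (ε/(8*N)) with hcbdef
  have h8N : (0:ℝ) < 8*N := by linarith
  have hcb0 : (0:ℝ) < cb := lt_min one_pos (div_pos hε h8N)
  have hcb1 : cb ≤ 1 := min_le_left _ _
  have hcbε : cb ≤ ε/(8*N) := min_le_right _ _
  set r2 : ℝ := min (1/2) (ε/(8*N*(2+(6+2*M1')))) with hr2def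
  have hden2 : (0:ℝ) < 8*N*(2+(6+2*M1')) := by nlinarith
  have hr20 : (0:ℝ) < r2 := lt_min (by norm_num) (div_pos hε hden2)
  have hr2h : r2 ≤ 1/2 := min_le_left _ _
  have hr2ε : r2 ≤ ε/(8*N*(2+(6+2*M1'))) := min_le_right _ _
  have hdenT : (0:ℝ) < 8*N*((2*N*((6+2*M1') + M3' + 1))+1) := by
    have e1 : (0:ℝ) < 2*N*((6+2*M1') + M3' + 1) :=
      mul_pos (by linarith) (by linarith)
    exact mul_pos h8N (by linarith)
  have hM2p : (0:ℝ) < M2' + 1 := by linarith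
  set εs : ℝ := min (1/(2*N))
      (min (ε/(8*N*((2*N*((6+2*M1') + M3' + 1))+1))) (cb/(M2'+1))) with hεsdef
  have hεs0 : (0:ℝ) < εs :=
    lt_min (div_pos one_pos (by linarith)) (lt_min (div_pos hε hdenT) (div_pos hcb0 hM2p))
  have hεsN : εs ≤ 1/(2*N) := min_le_left _ _
  have hεsT : εs ≤ ε/(8*N*((2*N*((6+2*M1') + M3' + 1))+1)) :=
    le_trans (min_le_right _ _) (min_le_left _ _)
  have hεsM : εs ≤ cb/(M2'+1) := le_trans (min_le_right _ _) (min_le_right _ _)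
  -- unified smoothness statement
  obtain ⟨δs, hδs0, φ, hφmono, hφev, hφbd⟩ :
      ∃ δs : ℝ, 0 < δs ∧ ∃ φ : ℝ → ℝ,
        (∀ x y : ℝ, 0 ≤ x → x ≤ y → φ x ≤ φ y) ∧
        (∀ᶠ n : ℕ in atTop, Real.sqrt n * φ (M2' * (n:ℝ) ^ (-β)) ≤ cb) ∧
        (∀ θ ∈ Θ0, ∀ η ∈ H0, ‖θ - θ0‖ < δs → (⨆ θ' : Θ, ‖η θ' - η0 θ'‖) < δs →
          ‖Ψ θ (η θ) - Ψ θ0 (η0 θ0) -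
              (Ψdot1 (θ - θ0) + Ψdot2 (Dη η0 θ0 (θ - θ0)) + Ψdot2 (η θ0 - η0 θ0))‖ ≤
            εs * ‖θ - θ0‖ + φ (⨆ θ' : Θ, ‖η θ' - η0 θ'‖)) := by
    rcases hsmooth with ⟨hβ, hs⟩ | ⟨hβ, α, hα1, hαβ, Cs, hs⟩
    · obtain ⟨δs, hδs0, h⟩ := hs εs hεs0
      refine ⟨δs, hδs0, fun x => εs * x, ?_, ?_, fun θ hθ η hη ha hb => h θ hθ η hη ha hb⟩
      · intro x y hx hxy
        exact mul_le_mul_of_nonneg_left hxy hεs0.le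
      · filter_upwards [eventually_ge_atTop 1] with n hn
        have hn0 : (0:ℝ) < n := by exact_mod_cast hn
        show Real.sqrt n * (εs * (M2' * (n:ℝ) ^ (-β))) ≤ cb
        have hsq : Real.sqrt n * (n:ℝ) ^ (-β) = 1 := by
          rw [hβ, Real.sqrt_eq_rpow, ← Real.rpow_add hn0]
          norm_num
        have heq : Real.sqrt n * (εs * (M2' * (n:ℝ) ^ (-β)))
            = εs * M2' * (Real.sqrt n * (n:ℝ) ^ (-β)) := by ring
        rw [heq, hsq, mul_one]
        have h2 : εs * (M2'+1) ≤ cb := (le_div_iff₀ hM2p).mp hεsM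
        have h3 : εs * M2' = εs * (M2'+1) - εs := by ring
        linarith [hεs0.le]
    · obtain ⟨δs, hδs0, h⟩ := hs εs hεs0
      have hsupn : ∀ (η : Euc d → E), (0:ℝ) ≤ ⨆ θ' : Θ, ‖η θ' - η0 θ'‖ :=
        fun η => Real.iSup_nonneg fun _ => norm_nonneg _
      refine ⟨δs, hδs0, fun x => |Cs| * x ^ α, ?_, ?_, ?_⟩
      · intro x y hx hxy
        exact mul_le_mul_of_nonneg_left (Real.rpow_le_rpow hx hxy (by linarith)) (abs_nonneg _)
      · have hM2'0 : (0:ℝ) < M2' := by linarith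
        have hexp : (0:ℝ) < α*β - 1/2 := by linarith
        have h0 : Tendsto (fun x : ℝ => x ^ (-(α*β - 1/2))) atTop (𝓝 0) :=
          tendsto_rpow_neg_atTop hexp
        have h1 : Tendsto (fun n : ℕ => |Cs| * M2' ^ α * (n:ℝ) ^ (-(α*β - 1/2))) atTop (𝓝 0) := by
          have := (h0.comp tendsto_natCast_atTop_atTop).const_mul (|Cs| * M2' ^ α)
          simpa using this
        filter_upwards [h1.eventually_lt_const hcb0, eventually_ge_atTop 1] with n hlt hn
        have hn0 : (0:ℝ) < n := by exact_mod_cast hn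
        show Real.sqrt n * (|Cs| * (M2' * (n:ℝ) ^ (-β)) ^ α) ≤ cb
        have e1 : (n:ℝ)^((1:ℝ)/2) * (n:ℝ)^(-β*α) = (n:ℝ)^(-(α*β - 1/2)) := by
          rw [← Real.rpow_add hn0]; congr 1; ring
        have heq : Real.sqrt n * (|Cs| * (M2' * (n:ℝ) ^ (-β)) ^ α)
            = |Cs| * M2' ^ α * (n:ℝ) ^ (-(α*β - 1/2)) := by
          rw [Real.mul_rpow hM2'0.le (Real.rpow_nonneg hn0.le _), ← Real.rpow_mul hn0.le,
            Real.sqrt_eq_rpow]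
          calc (n:ℝ)^((1:ℝ)/2) * (|Cs| * (M2'^α * (n:ℝ)^(-β*α)))
              = |Cs| * M2'^α * ((n:ℝ)^((1:ℝ)/2) * (n:ℝ)^(-β*α)) := by ring
          _ = |Cs| * M2'^α * (n:ℝ)^(-(α*β - 1/2)) := by rw [e1]
        rw [heq]
        exact hlt.le
      · intro θ hθ η hη ha hb
        refine (h θ hθ η hη ha hb).trans ?_
        show εs * ‖θ - θ0‖ + Cs * (⨆ θ' : Θ, ‖η θ' - η0 θ'‖) ^ α
            ≤ εs * ‖θ - θ0‖ + |Cs| * (⨆ θ' : Θ, ‖η θ' - η0 θ'‖) ^ α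
        have h0 : Cs * (⨆ θ' : Θ, ‖η θ' - η0 θ'‖) ^ α
            ≤ |Cs| * (⨆ θ' : Θ, ‖η θ' - η0 θ'‖) ^ α :=
          mul_le_mul_of_nonneg_right (le_abs_self _) (Real.rpow_nonneg (hsupn η) _)
        linarith
  -- neighborhood ball
  obtain ⟨δ0, hδ00, hball⟩ := Metric.mem_nhdsWithin_iff.mp hΘ0nbhd
  set r3 : ℝ := min δ0 δs with hr3def
  have hr30 : (0:ℝ) < r3 := lt_min hδ00 hδs0
  -- eventual smallness of the eta-rate bound
  have hrtend : Tendsto (fun n : ℕ => M2' * (n:ℝ) ^ (-β)) atTop (𝓝 0) := by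
    have h0 := (tendsto_rpow_neg_atTop hβpos).comp tendsto_natCast_atTop_atTop
    have := h0.const_mul M2'
    simpa using this
  have hδsev : ∀ᶠ n : ℕ in atTop, M2' * (n:ℝ) ^ (-β) < δs := hrtend.eventually_lt_const hδs0
  -- probability bounds
  have hofδ : (0:ℝ≥0∞) < ENNReal.ofReal (δ/6) := ENNReal.ofReal_pos.mpr hδ6
  have ev1 : ∀ᶠ n : ℕ in atTop,
      P {ω | cb * 1 ≤ Real.sqrt n * ‖Ψn n ω (θhat n ω) (ηhat n ω (θhat n ω))‖}
        ≤ ENNReal.ofReal (δ/6) :=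
    ((hroot cb hcb0).eventually_lt_const hofδ).mono fun n h => h.le
  have ev2 : ∀ᶠ n : ℕ in atTop,
      P {ω | r2 * 1 ≤
        ‖(Real.sqrt n) • (Ψn n ω (θhat n ω) (ηhat n ω (θhat n ω)) -
              Ψ (θhat n ω) (ηhat n ω (θhat n ω))) -
          (Real.sqrt n) • (Ψn n ω θ0 (η0 θ0) - Ψ θ0 (η0 θ0))‖ /
          (1 + Real.sqrt n * ‖Ψn n ω (θhat n ω) (ηhat n ω (θhat n ω))‖ +
            Real.sqrt n * ‖Ψ (θhat n ω) (ηhat n ω (θhat n ω))‖)} ≤ ENNReal.ofReal (δ/6) :=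
    ((hse r2 hr20).eventually_lt_const hofδ).mono fun n h => h.le
  have ev4 : ∀ᶠ n : ℕ in atTop,
      P {ω | r3 * 1 ≤ ‖θhat n ω - θ0‖} ≤ ENNReal.ofReal (δ/6) :=
    ((hcons r3 hr30).eventually_lt_const hofδ).mono fun n h => h.le
  have ev3 : ∀ᶠ n : ℕ in atTop,
      P {ω | M1' * 1 < Real.sqrt n * ‖Ψn n ω θ0 (η0 θ0)‖} ≤ ENNReal.ofReal (δ/6) := by
    refine hM1.mono fun n h => le_trans (measure_mono ?_) h
    intro ω hω
    simp only [Set.mem_setOf_eq] at hω ⊢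
    refine lt_of_le_of_lt ?_ hω
    simp only [mul_one]
    exact le_max_left _ _
  have ev6 : ∀ᶠ n : ℕ in atTop,
      P {ω | M3' * 1 < Real.sqrt n * ‖Ψdot2 (ηhat n ω θ0 - η0 θ0)‖} ≤ ENNReal.ofReal (δ/6) := by
    refine hM3.mono fun n h => le_trans (measure_mono ?_) h
    intro ω hω
    simp only [Set.mem_setOf_eq] at hω ⊢
    refine lt_of_le_of_lt ?_ hω
    simp only [mul_one]
    exact le_max_left _ _
  have ev5 : ∀ᶠ n : ℕ in atTop,
      P {ω | M2' * (n:ℝ) ^ (-β) < ⨆ θ : Θ, ‖ηhat n ω θ - η0 θ‖} ≤ ENNReal.ofReal (δ/6) := by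
    refine hM2.mono fun n h => le_trans (measure_mono ?_) h
    intro ω hω
    simp only [Set.mem_setOf_eq] at hω ⊢
    refine lt_of_le_of_lt ?_ hω
    exact mul_le_mul_of_nonneg_right (le_max_left _ _) (Real.rpow_nonneg (Nat.cast_nonneg n) _)
  -- main eventual bound
  have key : ∀ᶠ n : ℕ in atTop,
      P {ω | ε * 1 ≤ ‖(Real.sqrt n) • (θhat n ω - θ0) -
        A.symm ((Real.sqrt n) • ((Ψn n ω θ0 (η0 θ0) - Ψ θ0 (η0 θ0)) +
          Ψdot2 (ηhat n ω θ0 - η0 θ0)))‖} ≤ ENNReal.ofReal δ := by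
    filter_upwards [ev1, ev2, ev3, ev4, ev5, ev6, hφev, hδsev] with n h1 h2 h3 h4 h5 h6 hφn hδsn
    set B1 := {ω : Ω | cb * 1 ≤ Real.sqrt n * ‖Ψn n ω (θhat n ω) (ηhat n ω (θhat n ω))‖} with hB1
    set B2 := {ω : Ω | r2 * 1 ≤
        ‖(Real.sqrt n) • (Ψn n ω (θhat n ω) (ηhat n ω (θhat n ω)) -
              Ψ (θhat n ω) (ηhat n ω (θhat n ω))) -
          (Real.sqrt n) • (Ψn n ω θ0 (η0 θ0) - Ψ θ0 (η0 θ0))‖ /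
          (1 + Real.sqrt n * ‖Ψn n ω (θhat n ω) (ηhat n ω (θhat n ω))‖ +
            Real.sqrt n * ‖Ψ (θhat n ω) (ηhat n ω (θhat n ω))‖)} with hB2
    set B3 := {ω : Ω | M1' * 1 < Real.sqrt n * ‖Ψn n ω θ0 (η0 θ0)‖} with hB3
    set B4 := {ω : Ω | r3 * 1 ≤ ‖θhat n ω - θ0‖} with hB4
    set B5 := {ω : Ω | M2' * (n:ℝ) ^ (-β) < ⨆ θ : Θ, ‖ηhat n ω θ - η0 θ‖} with hB5
    set B6 := {ω : Ω | M3' * 1 < Real.sqrt n * ‖Ψdot2 (ηhat n ω θ0 - η0 θ0)‖} with hB6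
    have hsub : {ω : Ω | ε * 1 ≤ ‖(Real.sqrt n) • (θhat n ω - θ0) -
        A.symm ((Real.sqrt n) • ((Ψn n ω θ0 (η0 θ0) - Ψ θ0 (η0 θ0)) +
          Ψdot2 (ηhat n ω θ0 - η0 θ0)))‖} ⊆ B1 ∪ B2 ∪ B3 ∪ B4 ∪ B5 ∪ B6 := by
      intro ω hω
      by_contra hc
      simp only [hB1, hB2, hB3, hB4, hB5, hB6, Set.mem_union, Set.mem_setOf_eq, not_or,
        not_le, not_lt, mul_one] at hc
      obtain ⟨⟨⟨⟨⟨c1, c2⟩, c3⟩, c4⟩, c5⟩, c6⟩ := hc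
      simp only [Set.mem_setOf_eq, mul_one, hzero, sub_zero] at hω
      simp only [hzero, sub_zero] at c2
      have hs0 : (0:ℝ) ≤ Real.sqrt n := Real.sqrt_nonneg _
      -- θhat ∈ Θ0
      have hθΘ0 : θhat n ω ∈ Θ0 := by
        refine hball ⟨?_, hθhatΘ n ω⟩
        rw [Metric.mem_ball, dist_eq_norm]
        exact lt_of_lt_of_le c4 (min_le_left _ _)
      have hsupnn : (0:ℝ) ≤ ⨆ θ' : Θ, ‖ηhat n ω θ' - η0 θ'‖ :=
        Real.iSup_nonneg fun _ => norm_nonneg _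
      have hsupδs : (⨆ θ' : Θ, ‖ηhat n ω θ' - η0 θ'‖) < δs := lt_of_le_of_lt c5 hδsn
      -- remainder bound
      have hrem0 := hφbd (θhat n ω) hθΘ0 (ηhat n ω) (hηhatH0 n ω)
        (lt_of_lt_of_le c4 (min_le_right _ _)) hsupδs
      have eA : Ψ (θhat n ω) (ηhat n ω (θhat n ω)) - Ψ θ0 (η0 θ0) -
          (Ψdot1 (θhat n ω - θ0) + Ψdot2 (Dη η0 θ0 (θhat n ω - θ0)) +
            Ψdot2 (ηhat n ω θ0 - η0 θ0)) =
          Ψ (θhat n ω) (ηhat n ω (θhat n ω)) + A (θhat n ω - θ0) -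
            Ψdot2 (ηhat n ω θ0 - η0 θ0) := by
        rw [hzero, hA]; abel
      rw [eA] at hrem0
      -- equicontinuity bound
      have hdenom : (0:ℝ) < 1 + Real.sqrt n * ‖Ψn n ω (θhat n ω) (ηhat n ω (θhat n ω))‖ +
          Real.sqrt n * ‖Ψ (θhat n ω) (ηhat n ω (θhat n ω))‖ := by
        have h01 := mul_nonneg hs0 (norm_nonneg (Ψn n ω (θhat n ω) (ηhat n ω (θhat n ω))))
        have h02 := mul_nonneg hs0 (norm_nonneg (Ψ (θhat n ω) (ηhat n ω (θhat n ω))))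
        linarith
      have hD : ‖(Real.sqrt n) • (Ψn n ω (θhat n ω) (ηhat n ω (θhat n ω)) -
            Ψ (θhat n ω) (ηhat n ω (θhat n ω))) - (Real.sqrt n) • (Ψn n ω θ0 (η0 θ0))‖ ≤
          r2 * (1 + Real.sqrt n * ‖Ψn n ω (θhat n ω) (ηhat n ω (θhat n ω))‖ +
            Real.sqrt n * ‖Ψ (θhat n ω) (ηhat n ω (θhat n ω))‖) :=
        ((div_lt_iff₀ hdenom).mp c2).le
      -- phi bound
      have hφs : Real.sqrt n * φ (⨆ θ' : Θ, ‖ηhat n ω θ' - η0 θ'‖) ≤ cb := by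
        have h0 : φ (⨆ θ' : Θ, ‖ηhat n ω θ' - η0 θ'‖) ≤ φ (M2' * (n:ℝ) ^ (-β)) :=
          hφmono _ _ hsupnn c5
        exact le_trans (mul_le_mul_of_nonneg_left h0 hs0) hφn
      have hfin := zest_core A hNle hN1 hs0 hε hM1'1 hM3'1 hcb1 hcbε hcb0 hr20.le hr2h hr2ε
        hεs0.le hεsN hεsT hφs
        (Ψn n ω (θhat n ω) (ηhat n ω (θhat n ω)))
        (Ψ (θhat n ω) (ηhat n ω (θhat n ω)))
        (Ψn n ω θ0 (η0 θ0))
        (Ψdot2 (ηhat n ω θ0 - η0 θ0))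
        (θhat n ω - θ0)
        c1 hD c3 c6 hrem0
      exact absurd hω (not_le.mpr hfin)
    calc P {ω : Ω | ε * 1 ≤ ‖(Real.sqrt n) • (θhat n ω - θ0) -
        A.symm ((Real.sqrt n) • ((Ψn n ω θ0 (η0 θ0) - Ψ θ0 (η0 θ0)) +
          Ψdot2 (ηhat n ω θ0 - η0 θ0)))‖}
        ≤ P (B1 ∪ B2 ∪ B3 ∪ B4 ∪ B5 ∪ B6) := measure_mono hsub
    _ ≤ P (B1 ∪ B2 ∪ B3 ∪ B4 ∪ B5) + P B6 := measure_union_le _ _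
    _ ≤ (P (B1 ∪ B2 ∪ B3 ∪ B4) + P B5) + P B6 :=
        add_le_add (measure_union_le _ _) le_rfl
    _ ≤ ((P (B1 ∪ B2 ∪ B3) + P B4) + P B5) + P B6 :=
        add_le_add (add_le_add (measure_union_le _ _) le_rfl) le_rfl
    _ ≤ (((P (B1 ∪ B2) + P B3) + P B4) + P B5) + P B6 :=
        add_le_add (add_le_add (add_le_add (measure_union_le _ _) le_rfl) le_rfl) le_rfl
    _ ≤ ((((P B1 + P B2) + P B3) + P B4) + P B5) + P B6 :=
        add_le_add (add_le_add (add_le_add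
          (add_le_add (measure_union_le _ _) le_rfl) le_rfl) le_rfl) le_rfl
    _ ≤ ((((ENNReal.ofReal (δ/6) + ENNReal.ofReal (δ/6)) + ENNReal.ofReal (δ/6)) +
          ENNReal.ofReal (δ/6)) + ENNReal.ofReal (δ/6)) + ENNReal.ofReal (δ/6) :=
        add_le_add (add_le_add (add_le_add (add_le_add (add_le_add h1 h2) h3) h4) h5) h6
    _ = ENNReal.ofReal δ := by
        rw [← ENNReal.ofReal_add hδ6.le hδ6.le, ← ENNReal.ofReal_add (by linarith) hδ6.le,
          ← ENNReal.ofReal_add (by linarith) hδ6.le, ← ENNReal.ofReal_add (by linarith) hδ6.le,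
          ← ENNReal.ofReal_add (by linarith) hδ6.le]
        congr 1
        ring
  rw [Filter.eventually_atTop] at key
  obtain ⟨N0, hkey⟩ := key
  exact ⟨N0, fun n hn => le_trans (hkey n hn) hδε'⟩
end
end

section
/- Asymptotic representation when the nuisance parameter does not depend on θ (Corollary 2.3). Assume θ̂_n is a consistent estimator of θ0 (θ̂_n → θ0 in probability) with Ψ_n(θ̂_n, η̂_n) = o_p(n^{-1/2}), θ0 is the unique zero of θ ↦ Ψ(θ, η0) on Θ, ‖η̂_n − η0‖_E = O_p(n^{-β}) for some β ∈ (0, 1/2], and: (i) stochastic equicontinuity: |√n(Ψ_n − Ψ)(θ̂_n, η̂_n) − √n(Ψ_n − Ψ)(θ0, η0)| / (1 + √n|Ψ_n(θ̂_n, η̂_n)| + √n|Ψ(θ̂_n, η̂_n)|) = o_p(1); (ii) √n Ψ_n(θ0, η0) = O_p(1); (iii) smoothness: there exist a nonsingular d×d matrix Ψ̇_θ and a continuous linear map Ψ̇_η : E → ℝ^d such that, as θ → θ0 and ‖η − η0‖_E → 0, |Ψ(θ, η) − Ψ(θ0, η0) − Ψ̇_θ(θ − θ0) − Ψ̇_η[η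 − η0]| = o(|θ − θ0|) + o(‖η − η0‖_E) if β = 1/2, or = o(|θ − θ0|) + O(‖η − η0‖_E^α) for some α > 1 with αβ > 1/2 if 0 < β < 1/2; (iv) √n Ψ̇_η[η̂_n − η0] = O_p(1). Then √n |θ̂_n − θ0| = O_p(1) and √n(θ̂_n − θ0) = (−Ψ̇_θ)^{-1} √n { (Ψ_n − Ψ)(θ0, η0) + Ψ̇_η[η̂_n − η0] } + o_p(1). -/
open MeasureTheory Filter Topology ProbabilityTheory
open scoped ENNReal NNReal InnerProductSpace

noncomputable section

set_option maxHeartbeats 1000000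
section Helpers

open MeasureTheory Filter Topology
open scoped ENNReal

private lemma tendsto_zero_of_ofReal' {f : ℕ → ℝ≥0∞}
    (h : ∀ δ : ℝ, 0 < δ → ∀ᶠ n in Filter.atTop, f n ≤ ENNReal.ofReal δ) :
    Filter.Tendsto f Filter.atTop (nhds 0) := by
  rw [ENNReal.tendsto_atTop_zero]
  intro ε hε
  rcases eq_or_ne ε ⊤ with rfl | hne
  · exact ⟨0, fun n _ => le_top⟩
  · have hδ : 0 < ε.toReal := ENNReal.toReal_pos hε.ne' hne
    obtain ⟨N, hN⟩ := Filter.eventually_atTop.mp (h ε.toReal hδ)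
    exact ⟨N, fun n hn => (hN n hn).trans_eq (ENNReal.ofReal_toReal hne)⟩

private lemma vec1' {V : Type*} [NormedAddCommGroup V] (x y z : V) :
    ‖y‖ ≤ ‖x - y - z‖ + ‖x‖ + ‖z‖ := by
  have h : y = x - (x - y - z) - z := by abel
  calc ‖y‖ = ‖x - (x - y - z) - z‖ := by rw [← h]
    _ ≤ ‖x - (x - y - z)‖ + ‖z‖ := norm_sub_le _ _
    _ ≤ ‖x - y - z‖ + ‖x‖ + ‖z‖ := by
        have := norm_sub_le x (x - y - z); linarith

private lemma vec2' {V : Type*} [NormedAddCommGroup V] (x y z : V) :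
    ‖y + z‖ ≤ ‖x - y - z‖ + ‖x‖ := by
  have h : y + z = x - (x - y - z) := by abel
  calc ‖y + z‖ = ‖x - (x - y - z)‖ := by rw [← h]
    _ ≤ ‖x‖ + ‖x - y - z‖ := norm_sub_le _ _
    _ ≤ _ := by linarith

private lemma key_small' (c ε K : ℝ) (hc : 0 ≤ c) (hε : 0 < ε) (hK : 0 < K) :
    ∃ u : ℝ, 0 < u ∧ c * (u * K) ≤ ε := by
  refine ⟨ε / ((c + 1) * K), by positivity, ?_⟩
  have h1 : c * (ε / ((c + 1) * K) * K) = (c / (c + 1)) * ε := by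
    field_simp
  rw [h1]
  have h2 : c / (c + 1) ≤ 1 := (div_le_one (by linarith)).mpr (by linarith)
  nlinarith

private lemma oP_ev' {Ω : Type*} [MeasurableSpace Ω] {P : Measure Ω} {X : ℕ → Ω → ℝ}
    (h : oP P X (fun _ => 1)) (ε δ : ℝ) (hε : 0 < ε) (hδ : 0 < δ) :
    ∀ᶠ n in Filter.atTop, P {ω | ε ≤ X n ω} ≤ ENNReal.ofReal δ := by
  have h2 := (h ε hε).eventually_lt_const (ENNReal.ofReal_pos.mpr hδ)
  filter_upwards [h2] with n hn
  have : {ω | ε ≤ X n ω} = {ω | ε * 1 ≤ X n ω} := by simp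
  rw [this]; exact hn.le

private lemma OP_nonneg' {Ω : Type*} [MeasurableSpace Ω] {P : Measure Ω} {X : ℕ → Ω → ℝ}
    {a : ℕ → ℝ} (ha : ∀ n, 0 ≤ a n) (h : OP P X a) (δ : ℝ) (hδ : 0 < δ) :
    ∃ M : ℝ, 0 ≤ M ∧ ∀ᶠ n in Filter.atTop, P {ω | M * a n < X n ω} ≤ ENNReal.ofReal δ := by
  obtain ⟨M, hM⟩ := h δ hδ
  refine ⟨max M 0, le_max_right _ _, hM.mono fun n hn => le_trans (measure_mono ?_) hn⟩
  intro ω hω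
  exact lt_of_le_of_lt (mul_le_mul_of_nonneg_right (le_max_left M 0) (ha n)) hω

private lemma union6' {Ω : Type*} [MeasurableSpace Ω] (P : Measure Ω)
    (B1 B2 B3 B4 B5 B6 : Set Ω) (δ' : ℝ) (hδ' : 0 ≤ δ')
    (h1 : P B1 ≤ ENNReal.ofReal δ') (h2 : P B2 ≤ ENNReal.ofReal δ')
    (h3 : P B3 ≤ ENNReal.ofReal δ') (h4 : P B4 ≤ ENNReal.ofReal δ')
    (h5 : P B5 ≤ ENNReal.ofReal δ') (h6 : P B6 ≤ ENNReal.ofReal δ') :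
    P (B1 ∪ (B2 ∪ (B3 ∪ (B4 ∪ (B5 ∪ B6))))) ≤ ENNReal.ofReal (6 * δ') := by
  have step : P (B1 ∪ (B2 ∪ (B3 ∪ (B4 ∪ (B5 ∪ B6))))) ≤
      P B1 + (P B2 + (P B3 + (P B4 + (P B5 + P B6)))) := by
    refine (measure_union_le _ _).trans (add_le_add_right ?_ _)
    refine (measure_union_le _ _).trans (add_le_add_right ?_ _)
    refine (measure_union_le _ _).trans (add_le_add_right ?_ _)
    refine (measure_union_le _ _).trans (add_le_add_right ?_ _)
    exact measure_union_le _ _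
  refine step.trans ?_
  have hsum : ENNReal.ofReal δ' + (ENNReal.ofReal δ' + (ENNReal.ofReal δ' +
      (ENNReal.ofReal δ' + (ENNReal.ofReal δ' + ENNReal.ofReal δ')))) =
      ENNReal.ofReal (6 * δ') := by
    rw [← ENNReal.ofReal_add hδ' hδ', ← ENNReal.ofReal_add hδ' (by linarith),
      ← ENNReal.ofReal_add hδ' (by linarith), ← ENNReal.ofReal_add hδ' (by linarith),
      ← ENNReal.ofReal_add hδ' (by linarith)]
    ring_nf
  rw [← hsum]
  gcongr

private lemma union8' {Ω : Type*} [MeasurableSpace Ω] (P : Measure Ω)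
    (B1 B2 B3 B4 B5 B6 B7 B8 : Set Ω) (δ' : ℝ) (hδ' : 0 ≤ δ')
    (h1 : P B1 ≤ ENNReal.ofReal δ') (h2 : P B2 ≤ ENNReal.ofReal δ')
    (h3 : P B3 ≤ ENNReal.ofReal δ') (h4 : P B4 ≤ ENNReal.ofReal δ')
    (h5 : P B5 ≤ ENNReal.ofReal δ') (h6 : P B6 ≤ ENNReal.ofReal δ')
    (h7 : P B7 ≤ ENNReal.ofReal δ') (h8 : P B8 ≤ ENNReal.ofReal δ') :
    P (B1 ∪ (B2 ∪ (B3 ∪ (B4 ∪ (B5 ∪ (B6 ∪ (B7 ∪ B8))))))) ≤ ENNReal.ofReal (8 * δ') := by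
  have step : P (B1 ∪ (B2 ∪ (B3 ∪ (B4 ∪ (B5 ∪ (B6 ∪ (B7 ∪ B8))))))) ≤
      P B1 + (P B2 + (P B3 + (P B4 + (P B5 + (P B6 + (P B7 + P B8)))))) := by
    refine (measure_union_le _ _).trans (add_le_add_right ?_ _)
    refine (measure_union_le _ _).trans (add_le_add_right ?_ _)
    refine (measure_union_le _ _).trans (add_le_add_right ?_ _)
    refine (measure_union_le _ _).trans (add_le_add_right ?_ _)
    refine (measure_union_le _ _).trans (add_le_add_right ?_ _)
    refine (measure_union_le _ _).trans (add_le_add_right ?_ _)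
    exact measure_union_le _ _
  refine step.trans ?_
  have hsum : ENNReal.ofReal δ' + (ENNReal.ofReal δ' + (ENNReal.ofReal δ' +
      (ENNReal.ofReal δ' + (ENNReal.ofReal δ' + (ENNReal.ofReal δ' +
      (ENNReal.ofReal δ' + ENNReal.ofReal δ')))))) = ENNReal.ofReal (8 * δ') := by
    rw [← ENNReal.ofReal_add hδ' hδ', ← ENNReal.ofReal_add hδ' (by linarith),
      ← ENNReal.ofReal_add hδ' (by linarith), ← ENNReal.ofReal_add hδ' (by linarith),
      ← ENNReal.ofReal_add hδ' (by linarith), ← ENNReal.ofReal_add hδ' (by linarith),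
      ← ENNReal.ofReal_add hδ' (by linarith)]
    ring_nf
  rw [← hsum]
  gcongr

end Helpers

private lemma vec3' {V : Type*} [NormedAddCommGroup V] (x y z : V) :
    ‖x - y - z‖ ≤ ‖x‖ + ‖y‖ + ‖z‖ := by
  refine (norm_sub_le _ _).trans ?_
  have := norm_sub_le x y; linarith
lemma smooth_unified
    {d : ℕ} {E : Type*} [NormedAddCommGroup E] [NormedSpace ℝ E] {Ω : Type*}
    (Ψ : Euc d → E → Euc d) (θ0 : Euc d) (η0 : E)
    (Ψdotθ : Euc d →L[ℝ] Euc d) (Ψdotη : E →L[ℝ] Euc d)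
    (β : ℝ) (hβpos : 0 < β)
    (hsmooth :
      (β = 1 / 2 ∧ ∀ ε : ℝ, 0 < ε → ∃ δ : ℝ, 0 < δ ∧ ∀ θ : Euc d, ∀ η : E,
          ‖θ - θ0‖ < δ → ‖η - η0‖ < δ →
          ‖Ψ θ η - Ψ θ0 η0 - (Ψdotθ (θ - θ0) + Ψdotη (η - η0))‖ ≤
            ε * ‖θ - θ0‖ + ε * ‖η - η0‖) ∨
      (β < 1 / 2 ∧ ∃ α : ℝ, 1 < α ∧ 1 / 2 < α * β ∧ ∃ Cs : ℝ, ∀ ε : ℝ, 0 < ε →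
          ∃ δ : ℝ, 0 < δ ∧ ∀ θ : Euc d, ∀ η : E,
          ‖θ - θ0‖ < δ → ‖η - η0‖ < δ →
          ‖Ψ θ η - Ψ θ0 η0 - (Ψdotθ (θ - θ0) + Ψdotη (η - η0))‖ ≤
            ε * ‖θ - θ0‖ + Cs * ‖η - η0‖ ^ α))
    (θhat : ℕ → Ω → Euc d) (ηhat : ℕ → Ω → E)
    (Mh : ℝ) (hMh : 0 ≤ Mh) (εs : ℝ) (hεs : 0 < εs) :
    ∃ δs : ℝ, 0 < δs ∧ ∀ᶠ n in Filter.atTop, ∀ ω : Ω,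
      ‖ηhat n ω - η0‖ ≤ Mh * (n : ℝ) ^ (-β) →
      ‖θhat n ω - θ0‖ < δs →
      Real.sqrt n * ‖Ψ (θhat n ω) (ηhat n ω) - Ψ θ0 η0 -
          (Ψdotθ (θhat n ω - θ0) + Ψdotη (ηhat n ω - η0))‖ ≤
        εs * (Real.sqrt n * ‖θhat n ω - θ0‖) + εs * (Mh + 1) := by
  have hrate : Filter.Tendsto (fun n : ℕ => Mh * (n : ℝ) ^ (-β)) Filter.atTop (nhds 0) := by
    have := ((tendsto_rpow_neg_atTop hβpos).comp tendsto_natCast_atTop_atTop).const_mul Mh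
    simpa using this
  rcases hsmooth with ⟨hβ, hs⟩ | ⟨hβlt, α, hα1, hαβ, Cs, hs⟩
  · obtain ⟨δ, hδ, hsd⟩ := hs εs hεs
    refine ⟨δ, hδ, ?_⟩
    filter_upwards [hrate.eventually_lt_const hδ, Filter.eventually_ge_atTop 1]
      with n hnδ hn1 ω hη hθ
    have hsq : (0:ℝ) ≤ Real.sqrt n := Real.sqrt_nonneg _
    have hb := hsd _ _ hθ (lt_of_le_of_lt hη hnδ)
    have h2 : Real.sqrt n * ‖Ψ (θhat n ω) (ηhat n ω) - Ψ θ0 η0 -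
          (Ψdotθ (θhat n ω - θ0) + Ψdotη (ηhat n ω - η0))‖ ≤
        Real.sqrt n * (εs * ‖θhat n ω - θ0‖ + εs * ‖ηhat n ω - η0‖) :=
      mul_le_mul_of_nonneg_left hb hsq
    have h3 : Real.sqrt n * ‖ηhat n ω - η0‖ ≤ Mh := by
      have := mul_le_mul_of_nonneg_left hη hsq
      have hone : Real.sqrt n * ((n:ℝ) ^ (-β)) = 1 := by
        subst hβ
        have hn0 : (0:ℝ) < n := by exact_mod_cast hn1
        rw [Real.sqrt_eq_rpow, ← Real.rpow_add hn0]
        norm_num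
      calc Real.sqrt n * ‖ηhat n ω - η0‖ ≤ Real.sqrt n * (Mh * (n:ℝ) ^ (-β)) := this
        _ = Mh * (Real.sqrt n * ((n:ℝ) ^ (-β))) := by ring
        _ = Mh := by rw [hone, mul_one]
    nlinarith [hεs.le, hsq, norm_nonneg (ηhat n ω - η0)]
  · obtain ⟨δ, hδ, hsd⟩ := hs εs hεs
    refine ⟨δ, hδ, ?_⟩
    have hexp : (0:ℝ) < α * β - 1/2 := by linarith
    have hsmall : Filter.Tendsto (fun n : ℕ => |Cs| * Mh ^ α * (n : ℝ) ^ (-(α * β - 1/2)))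
        Filter.atTop (nhds 0) := by
      have := ((tendsto_rpow_neg_atTop hexp).comp tendsto_natCast_atTop_atTop).const_mul
        (|Cs| * Mh ^ α)
      simpa using this
    filter_upwards [hrate.eventually_lt_const hδ, Filter.eventually_ge_atTop 1,
      hsmall.eventually_lt_const (by positivity : (0:ℝ) < εs * (Mh + 1))]
      with n hnδ hn1 hnsm ω hη hθ
    have hn0 : (0:ℝ) < n := by exact_mod_cast hn1
    have hsq : (0:ℝ) ≤ Real.sqrt n := Real.sqrt_nonneg _
    have hb := hsd _ _ hθ (lt_of_le_of_lt hη hnδ)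
    have hα0 : (0:ℝ) ≤ α := by linarith
    -- bound the Cs term
    have hpow : Cs * ‖ηhat n ω - η0‖ ^ α ≤ |Cs| * (Mh ^ α * ((n:ℝ) ^ (-β)) ^ α) := by
      have h1 : ‖ηhat n ω - η0‖ ^ α ≤ (Mh * (n:ℝ) ^ (-β)) ^ α :=
        Real.rpow_le_rpow (norm_nonneg _) hη hα0
      have h2 : (Mh * (n:ℝ) ^ (-β)) ^ α = Mh ^ α * ((n:ℝ) ^ (-β)) ^ α :=
        Real.mul_rpow hMh (Real.rpow_nonneg (Nat.cast_nonneg n) _)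
      have h3 : Cs * ‖ηhat n ω - η0‖ ^ α ≤ |Cs| * ‖ηhat n ω - η0‖ ^ α :=
        mul_le_mul_of_nonneg_right (le_abs_self Cs) (Real.rpow_nonneg (norm_nonneg _) _)
      calc Cs * ‖ηhat n ω - η0‖ ^ α ≤ |Cs| * ‖ηhat n ω - η0‖ ^ α := h3
        _ ≤ |Cs| * (Mh * (n:ℝ) ^ (-β)) ^ α :=
            mul_le_mul_of_nonneg_left h1 (abs_nonneg _)
        _ = |Cs| * (Mh ^ α * ((n:ℝ) ^ (-β)) ^ α) := by rw [h2]
    have hsn : Real.sqrt n * (|Cs| * (Mh ^ α * ((n:ℝ) ^ (-β)) ^ α)) =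
        |Cs| * Mh ^ α * (n : ℝ) ^ (-(α * β - 1/2)) := by
      rw [← Real.rpow_mul hn0.le, Real.sqrt_eq_rpow,
        show (-(α * β - 1/2)) = 1/2 + (-β * α) by ring, Real.rpow_add hn0]
      ring
    have h2 : Real.sqrt n * ‖Ψ (θhat n ω) (ηhat n ω) - Ψ θ0 η0 -
          (Ψdotθ (θhat n ω - θ0) + Ψdotη (ηhat n ω - η0))‖ ≤
        Real.sqrt n * (εs * ‖θhat n ω - θ0‖ + Cs * ‖ηhat n ω - η0‖ ^ α) :=
      mul_le_mul_of_nonneg_left hb hsq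
    have h4 : Real.sqrt n * (Cs * ‖ηhat n ω - η0‖ ^ α) ≤ εs * (Mh + 1) := by
      calc Real.sqrt n * (Cs * ‖ηhat n ω - η0‖ ^ α)
          ≤ Real.sqrt n * (|Cs| * (Mh ^ α * ((n:ℝ) ^ (-β)) ^ α)) :=
            mul_le_mul_of_nonneg_left hpow hsq
        _ = |Cs| * Mh ^ α * (n : ℝ) ^ (-(α * β - 1/2)) := hsn
        _ ≤ εs * (Mh + 1) := hnsm.le
    nlinarith [hsq]
/-- Corollary 2.3: asymptotic representation when the nuisance parameter
does not depend on θ. -/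
theorem corollary_2_3_unbundled_Z_estimator
    {d : ℕ} (hd : 1 ≤ d) {E : Type*} [NormedAddCommGroup E] [NormedSpace ℝ E]
    {Ω : Type*} [MeasurableSpace Ω] (P : Measure Ω) [IsProbabilityMeasure P]
    (Θ : Set (Euc d)) (hΘ : IsCompact Θ)
    (θ0 : Euc d) (hθ0 : θ0 ∈ Θ)
    (Ψn : ℕ → Ω → Euc d → E → Euc d)
    (Ψ : Euc d → E → Euc d)
    (η0 : E)
    (hzero : Ψ θ0 η0 = 0)
    (huniq : ∀ θ ∈ Θ, Ψ θ η0 = 0 → θ = θ0)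
    (θhat : ℕ → Ω → Euc d) (hθhatΘ : ∀ n ω, θhat n ω ∈ Θ)
    (ηhat : ℕ → Ω → E)
    (hcons : oP P (fun n ω => ‖θhat n ω - θ0‖) (fun _ => 1))
    (hroot : oP P (fun n ω => Real.sqrt n * ‖Ψn n ω (θhat n ω) (ηhat n ω)‖) (fun _ => 1))
    (β : ℝ) (hβpos : 0 < β) (hβle : β ≤ 1 / 2)
    (hηrate : OP P (fun n ω => ‖ηhat n ω - η0‖) (fun n => (n : ℝ) ^ (-β)))
    -- (i) stochastic equicontinuity
    (hse : oP P (fun n ω =>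
        ‖(Real.sqrt n) • (Ψn n ω (θhat n ω) (ηhat n ω) - Ψ (θhat n ω) (ηhat n ω)) -
          (Real.sqrt n) • (Ψn n ω θ0 η0 - Ψ θ0 η0)‖ /
          (1 + Real.sqrt n * ‖Ψn n ω (θhat n ω) (ηhat n ω)‖ +
            Real.sqrt n * ‖Ψ (θhat n ω) (ηhat n ω)‖)) (fun _ => 1))
    -- (ii)
    (htight : OP P (fun n ω => Real.sqrt n * ‖Ψn n ω θ0 η0‖) (fun _ => 1))
    -- (iii) smoothness with nonsingular Ψ̇_θ
    (Ψdotθ : Euc d →L[ℝ] Euc d) (Ψdotη : E →L[ℝ] Euc d)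
    (A : Euc d ≃L[ℝ] Euc d) (hA : ∀ v : Euc d, A v = -(Ψdotθ v))
    (hsmooth :
      (β = 1 / 2 ∧ ∀ ε : ℝ, 0 < ε → ∃ δ : ℝ, 0 < δ ∧ ∀ θ : Euc d, ∀ η : E,
          ‖θ - θ0‖ < δ → ‖η - η0‖ < δ →
          ‖Ψ θ η - Ψ θ0 η0 - (Ψdotθ (θ - θ0) + Ψdotη (η - η0))‖ ≤
            ε * ‖θ - θ0‖ + ε * ‖η - η0‖) ∨
      (β < 1 / 2 ∧ ∃ α : ℝ, 1 < α ∧ 1 / 2 < α * β ∧ ∃ Cs : ℝ, ∀ ε : ℝ, 0 < ε →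
          ∃ δ : ℝ, 0 < δ ∧ ∀ θ : Euc d, ∀ η : E,
          ‖θ - θ0‖ < δ → ‖η - η0‖ < δ →
          ‖Ψ θ η - Ψ θ0 η0 - (Ψdotθ (θ - θ0) + Ψdotη (η - η0))‖ ≤
            ε * ‖θ - θ0‖ + Cs * ‖η - η0‖ ^ α))
    -- (iv)
    (hiv : OP P (fun n ω => Real.sqrt n * ‖Ψdotη (ηhat n ω - η0)‖) (fun _ => 1)) :
    OP P (fun n ω => Real.sqrt n * ‖θhat n ω - θ0‖) (fun _ => 1) ∧
    oP P (fun n ω =>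
      ‖(Real.sqrt n) • (θhat n ω - θ0) -
        A.symm ((Real.sqrt n) • ((Ψn n ω θ0 η0 - Ψ θ0 η0) + Ψdotη (ηhat n ω - η0)))‖)
      (fun _ => 1) := by
  classical
  set c : ℝ := ‖(A.symm : Euc d →L[ℝ] Euc d)‖ with hcdef
  have hc0 : (0:ℝ) ≤ c := norm_nonneg _
  -- nonnegativity facts used everywhere
  have hsq : ∀ n : ℕ, (0:ℝ) ≤ Real.sqrt n := fun n => Real.sqrt_nonneg _
  -- Pointwise vector inequalities.
  -- PT1 : S ≤ D + Z + W
  have PT1 : ∀ (n : ℕ) (ω : Ω),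
      Real.sqrt n * ‖Ψ (θhat n ω) (ηhat n ω)‖ ≤
        ‖(Real.sqrt n) • (Ψn n ω (θhat n ω) (ηhat n ω) - Ψ (θhat n ω) (ηhat n ω)) -
          (Real.sqrt n) • (Ψn n ω θ0 η0 - Ψ θ0 η0)‖ +
        Real.sqrt n * ‖Ψn n ω (θhat n ω) (ηhat n ω)‖ + Real.sqrt n * ‖Ψn n ω θ0 η0‖ := by
    intro n ω
    have hD : (Real.sqrt n) • (Ψn n ω (θhat n ω) (ηhat n ω) - Ψ (θhat n ω) (ηhat n ω)) -
          (Real.sqrt n) • (Ψn n ω θ0 η0 - Ψ θ0 η0) =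
        (Real.sqrt n) • Ψn n ω (θhat n ω) (ηhat n ω) -
          (Real.sqrt n) • Ψ (θhat n ω) (ηhat n ω) - (Real.sqrt n) • Ψn n ω θ0 η0 := by
      rw [hzero]; module
    rw [hD]
    have := vec1' ((Real.sqrt n) • Ψn n ω (θhat n ω) (ηhat n ω))
      ((Real.sqrt n) • Ψ (θhat n ω) (ηhat n ω)) ((Real.sqrt n) • Ψn n ω θ0 η0)
    simpa [norm_smul, Real.norm_eq_abs, abs_of_nonneg (hsq n)] using this
  -- PT3 : ‖s•Ψ(θ̂,η̂) + s•Ψn(θ0,η0)‖ ≤ D + Z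
  have PT3 : ∀ (n : ℕ) (ω : Ω),
      ‖(Real.sqrt n) • Ψ (θhat n ω) (ηhat n ω) + (Real.sqrt n) • Ψn n ω θ0 η0‖ ≤
        ‖(Real.sqrt n) • (Ψn n ω (θhat n ω) (ηhat n ω) - Ψ (θhat n ω) (ηhat n ω)) -
          (Real.sqrt n) • (Ψn n ω θ0 η0 - Ψ θ0 η0)‖ +
        Real.sqrt n * ‖Ψn n ω (θhat n ω) (ηhat n ω)‖ := by
    intro n ω
    have hD : (Real.sqrt n) • (Ψn n ω (θhat n ω) (ηhat n ω) - Ψ (θhat n ω) (ηhat n ω)) -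
          (Real.sqrt n) • (Ψn n ω θ0 η0 - Ψ θ0 η0) =
        (Real.sqrt n) • Ψn n ω (θhat n ω) (ηhat n ω) -
          (Real.sqrt n) • Ψ (θhat n ω) (ηhat n ω) - (Real.sqrt n) • Ψn n ω θ0 η0 := by
      rw [hzero]; module
    rw [hD]
    have := vec2' ((Real.sqrt n) • Ψn n ω (θhat n ω) (ηhat n ω))
      ((Real.sqrt n) • Ψ (θhat n ω) (ηhat n ω)) ((Real.sqrt n) • Ψn n ω θ0 η0)
    simpa [norm_smul, Real.norm_eq_abs, abs_of_nonneg (hsq n)] using this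
  -- PT4 : T ≤ c * (S + G + V)
  have PT4 : ∀ (n : ℕ) (ω : Ω),
      Real.sqrt n * ‖θhat n ω - θ0‖ ≤
        c * (Real.sqrt n * ‖Ψ (θhat n ω) (ηhat n ω)‖ +
          Real.sqrt n * ‖Ψdotη (ηhat n ω - η0)‖ +
          Real.sqrt n * ‖Ψ (θhat n ω) (ηhat n ω) - Ψ θ0 η0 -
            (Ψdotθ (θhat n ω - θ0) + Ψdotη (ηhat n ω - η0))‖) := by
    intro n ω
    have hs : (0:ℝ) ≤ Real.sqrt n := hsq n
    have hPd : Ψdotθ (θhat n ω - θ0) =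
        Ψ (θhat n ω) (ηhat n ω) - Ψdotη (ηhat n ω - η0) -
          (Ψ (θhat n ω) (ηhat n ω) - Ψ θ0 η0 -
            (Ψdotθ (θhat n ω - θ0) + Ψdotη (ηhat n ω - η0))) := by
      rw [hzero]; abel
    have h1 : Real.sqrt n * ‖θhat n ω - θ0‖ = ‖(Real.sqrt n) • (θhat n ω - θ0)‖ := by
      rw [norm_smul, Real.norm_eq_abs, abs_of_nonneg hs]
    have h3 : ‖(Real.sqrt n) • (θhat n ω - θ0)‖ ≤
        c * ‖A ((Real.sqrt n) • (θhat n ω - θ0))‖ := by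
      conv_lhs => rw [← A.symm_apply_apply ((Real.sqrt n) • (θhat n ω - θ0))]
      exact (A.symm : Euc d →L[ℝ] Euc d).le_opNorm _
    have h4 : ‖A ((Real.sqrt n) • (θhat n ω - θ0))‖ =
        Real.sqrt n * ‖Ψdotθ (θhat n ω - θ0)‖ := by
      rw [_root_.map_smul A (Real.sqrt (n:ℝ)) (θhat n ω - θ0), hA, norm_smul,
        Real.norm_eq_abs, abs_of_nonneg hs, norm_neg]
    have h5 : ‖Ψdotθ (θhat n ω - θ0)‖ ≤
        ‖Ψ (θhat n ω) (ηhat n ω)‖ + ‖Ψdotη (ηhat n ω - η0)‖ +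
          ‖Ψ (θhat n ω) (ηhat n ω) - Ψ θ0 η0 -
            (Ψdotθ (θhat n ω - θ0) + Ψdotη (ηhat n ω - η0))‖ := by
      conv_lhs => rw [hPd]
      exact vec3' _ _ _
    rw [h1]
    refine h3.trans ?_
    rw [h4]
    have h6 : Real.sqrt n * ‖Ψdotθ (θhat n ω - θ0)‖ ≤
        Real.sqrt n * ‖Ψ (θhat n ω) (ηhat n ω)‖ +
          Real.sqrt n * ‖Ψdotη (ηhat n ω - η0)‖ +
          Real.sqrt n * ‖Ψ (θhat n ω) (ηhat n ω) - Ψ θ0 η0 -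
            (Ψdotθ (θhat n ω - θ0) + Ψdotη (ηhat n ω - η0))‖ := by
      nlinarith [mul_le_mul_of_nonneg_left h5 hs]
    exact mul_le_mul_of_nonneg_left h6 hc0
  -- PT5 : F ≤ c * (‖s•Ψ + s•Ψn00‖ + V)
  have PT5 : ∀ (n : ℕ) (ω : Ω),
      ‖(Real.sqrt n) • (θhat n ω - θ0) -
        A.symm ((Real.sqrt n) • ((Ψn n ω θ0 η0 - Ψ θ0 η0) + Ψdotη (ηhat n ω - η0)))‖ ≤
      c * (‖(Real.sqrt n) • Ψ (θhat n ω) (ηhat n ω) + (Real.sqrt n) • Ψn n ω θ0 η0‖ +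
        Real.sqrt n * ‖Ψ (θhat n ω) (ηhat n ω) - Ψ θ0 η0 -
          (Ψdotθ (θhat n ω - θ0) + Ψdotη (ηhat n ω - η0))‖) := by
    intro n ω
    have hs : (0:ℝ) ≤ Real.sqrt n := hsq n
    have hPd : Ψdotθ (θhat n ω - θ0) =
        Ψ (θhat n ω) (ηhat n ω) - Ψdotη (ηhat n ω - η0) -
          (Ψ (θhat n ω) (ηhat n ω) - Ψ θ0 η0 -
            (Ψdotθ (θhat n ω - θ0) + Ψdotη (ηhat n ω - η0))) := by
      rw [hzero]; abel
    have key : (Real.sqrt n) • (θhat n ω - θ0) -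
        A.symm ((Real.sqrt n) • ((Ψn n ω θ0 η0 - Ψ θ0 η0) + Ψdotη (ηhat n ω - η0))) =
        A.symm (A ((Real.sqrt n) • (θhat n ω - θ0)) -
          (Real.sqrt n) • (Ψn n ω θ0 η0 + Ψdotη (ηhat n ω - η0))) := by
      rw [hzero, sub_zero,
        _root_.map_sub A.symm (A ((Real.sqrt n) • (θhat n ω - θ0)))
          ((Real.sqrt n) • (Ψn n ω θ0 η0 + Ψdotη (ηhat n ω - η0))),
        A.symm_apply_apply]
    rw [key]
    refine le_trans ((A.symm : Euc d →L[ℝ] Euc d).le_opNorm _) ?_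
    have h3 : A ((Real.sqrt n) • (θhat n ω - θ0)) -
        (Real.sqrt n) • (Ψn n ω θ0 η0 + Ψdotη (ηhat n ω - η0)) =
        -((Real.sqrt n) • Ψ (θhat n ω) (ηhat n ω) + (Real.sqrt n) • Ψn n ω θ0 η0) +
          (Real.sqrt n) • (Ψ (θhat n ω) (ηhat n ω) - Ψ θ0 η0 -
            (Ψdotθ (θhat n ω - θ0) + Ψdotη (ηhat n ω - η0))) := by
      rw [_root_.map_smul A (Real.sqrt (n:ℝ)) (θhat n ω - θ0), hA, hzero]
      module
    rw [h3]
    have h4 : ‖-((Real.sqrt n) • Ψ (θhat n ω) (ηhat n ω) + (Real.sqrt n) • Ψn n ω θ0 η0) +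
          (Real.sqrt n) • (Ψ (θhat n ω) (ηhat n ω) - Ψ θ0 η0 -
            (Ψdotθ (θhat n ω - θ0) + Ψdotη (ηhat n ω - η0)))‖ ≤
        ‖(Real.sqrt n) • Ψ (θhat n ω) (ηhat n ω) + (Real.sqrt n) • Ψn n ω θ0 η0‖ +
          Real.sqrt n * ‖Ψ (θhat n ω) (ηhat n ω) - Ψ θ0 η0 -
            (Ψdotθ (θhat n ω - θ0) + Ψdotη (ηhat n ω - η0))‖ := by
      refine (norm_add_le _ _).trans ?_
      rw [norm_neg, norm_smul, Real.norm_eq_abs, abs_of_nonneg hs]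
    exact mul_le_mul_of_nonneg_left h4 hc0
  -- Part (a)
  have partA : OP P (fun n ω => Real.sqrt n * ‖θhat n ω - θ0‖) (fun _ => 1) := by
    intro δ hδ
    have hδ6 : 0 < δ / 6 := by linarith
    obtain ⟨MW, hMW0, hMW⟩ := OP_nonneg' (fun _ => zero_le_one) htight (δ/6) hδ6
    obtain ⟨Mη, hMη0, hMη⟩ := OP_nonneg'
      (fun n => Real.rpow_nonneg (Nat.cast_nonneg n) _) hηrate (δ/6) hδ6
    obtain ⟨MG, hMG0, hMG⟩ := OP_nonneg' (fun _ => zero_le_one) hiv (δ/6) hδ6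
    have hεs0 : (0:ℝ) < (2*(c+1))⁻¹ := by positivity
    have hcεs0 : c * (2*(c+1))⁻¹ ≤ 1/2 := by
      rw [← one_div, mul_one_div, div_le_iff₀ (by linarith : (0:ℝ) < 2*(c+1))]
      linarith
    have hεs0le : (2*(c+1))⁻¹ ≤ 1 := by
      rw [inv_le_one_iff₀]; right; linarith
    obtain ⟨δs0, hδs0, hsmev⟩ := smooth_unified Ψ θ0 η0 Ψdotθ Ψdotη β hβpos hsmooth
      θhat ηhat Mη hMη0 _ hεs0
    have hU := oP_ev' hse (1/2) (δ/6) one_half_pos hδ6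
    have hZ := oP_ev' hroot 1 (δ/6) one_pos hδ6
    have hθc := oP_ev' hcons δs0 (δ/6) hδs0 hδ6
    refine ⟨2*c*((4 + 2*MW) + MG + (Mη+1)), ?_⟩
    filter_upwards [hMW, hMη, hMG, hU, hZ, hθc, hsmev] with n e1 e2 e3 e4 e5 e6 e7
    have hsub : {ω | 2*c*((4 + 2*MW) + MG + (Mη+1)) * 1 <
          Real.sqrt n * ‖θhat n ω - θ0‖} ⊆
        {ω | MW * 1 < Real.sqrt n * ‖Ψn n ω θ0 η0‖} ∪
        ({ω | Mη * (n:ℝ) ^ (-β) < ‖ηhat n ω - η0‖} ∪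
        ({ω | MG * 1 < Real.sqrt n * ‖Ψdotη (ηhat n ω - η0)‖} ∪
        ({ω | (1:ℝ)/2 ≤
            ‖(Real.sqrt n) • (Ψn n ω (θhat n ω) (ηhat n ω) - Ψ (θhat n ω) (ηhat n ω)) -
              (Real.sqrt n) • (Ψn n ω θ0 η0 - Ψ θ0 η0)‖ /
              (1 + Real.sqrt n * ‖Ψn n ω (θhat n ω) (ηhat n ω)‖ +
                Real.sqrt n * ‖Ψ (θhat n ω) (ηhat n ω)‖)} ∪
        ({ω | (1:ℝ) ≤ Real.sqrt n * ‖Ψn n ω (θhat n ω) (ηhat n ω)‖} ∪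
         {ω | δs0 ≤ ‖θhat n ω - θ0‖})))) := by
      intro ω hω
      simp only [Set.mem_setOf_eq] at hω
      by_contra hcon
      simp only [Set.mem_union, Set.mem_setOf_eq, not_or, not_lt, not_le] at hcon
      obtain ⟨hW, hη, hG, hUω, hZω, hθω⟩ := hcon
      have hVb := e7 ω hη hθω
      have hSb := PT1 n ω
      have hTb := PT4 n ω
      set DD : ℝ := ‖(Real.sqrt n) • (Ψn n ω (θhat n ω) (ηhat n ω) -
          Ψ (θhat n ω) (ηhat n ω)) - (Real.sqrt n) • (Ψn n ω θ0 η0 - Ψ θ0 η0)‖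
      set ZZ : ℝ := Real.sqrt n * ‖Ψn n ω (θhat n ω) (ηhat n ω)‖
      set SS : ℝ := Real.sqrt n * ‖Ψ (θhat n ω) (ηhat n ω)‖
      set WW : ℝ := Real.sqrt n * ‖Ψn n ω θ0 η0‖
      set GG : ℝ := Real.sqrt n * ‖Ψdotη (ηhat n ω - η0)‖
      set TT : ℝ := Real.sqrt n * ‖θhat n ω - θ0‖
      set VV : ℝ := Real.sqrt n * ‖Ψ (θhat n ω) (ηhat n ω) - Ψ θ0 η0 -
          (Ψdotθ (θhat n ω - θ0) + Ψdotη (ηhat n ω - η0))‖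
      have hD0 : (0:ℝ) ≤ DD := norm_nonneg _
      have hZ0 : (0:ℝ) ≤ ZZ := mul_nonneg (hsq n) (norm_nonneg _)
      have hS0 : (0:ℝ) ≤ SS := mul_nonneg (hsq n) (norm_nonneg _)
      have hT0 : (0:ℝ) ≤ TT := mul_nonneg (hsq n) (norm_nonneg _)
      have hG0 : (0:ℝ) ≤ GG := mul_nonneg (hsq n) (norm_nonneg _)
      have hV0 : (0:ℝ) ≤ VV := mul_nonneg (hsq n) (norm_nonneg _)
      clear_value DD ZZ SS WW GG TT VV
      have hden : (0:ℝ) < 1 + ZZ + SS := by linarith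
      have hDlt : DD < 1/2 * (1 + ZZ + SS) := (div_lt_iff₀ hden).mp hUω
      have hSlt : SS < 4 + 2*MW := by linarith
      have h1 : c * (SS + GG + VV) = c * SS + c * GG + c * VV := by ring
      have h2 : c * VV ≤ c * ((2*(c+1))⁻¹ * TT) + c * ((2*(c+1))⁻¹ * (Mη+1)) := by
        have := mul_le_mul_of_nonneg_left hVb hc0
        linarith
      have h3 : c * ((2*(c+1))⁻¹ * TT) ≤ (1/2) * TT := by
        rw [← mul_assoc]
        exact mul_le_mul_of_nonneg_right hcεs0 hT0
      have h4 : c * ((2*(c+1))⁻¹ * (Mη+1)) ≤ c * (Mη+1) := by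
        refine mul_le_mul_of_nonneg_left ?_ hc0
        nlinarith
      have h5 : c * SS ≤ c * (4 + 2*MW) := mul_le_mul_of_nonneg_left hSlt.le hc0
      have h6 : c * GG ≤ c * MG := mul_le_mul_of_nonneg_left (by linarith) hc0
      linarith [hTb, h1, h2, h3, h4, h5, h6, hω]
    refine (measure_mono hsub).trans ?_
    refine (union6' P _ _ _ _ _ _ (δ/6) hδ6.le e1 e2 e3 e4 e5 e6).trans ?_
    rw [show 6*(δ/6) = δ by ring]
  refine ⟨partA, ?_⟩
  -- Part (b)
  intro ε hε
  apply tendsto_zero_of_ofReal'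
  intro δ hδ
  have hδ8 : 0 < δ / 8 := by linarith
  obtain ⟨MW, hMW0, hMW⟩ := OP_nonneg' (fun _ => zero_le_one) htight (δ/8) hδ8
  obtain ⟨Mη, hMη0, hMη⟩ := OP_nonneg'
    (fun n => Real.rpow_nonneg (Nat.cast_nonneg n) _) hηrate (δ/8) hδ8
  obtain ⟨MT, hMT0, hMT⟩ := OP_nonneg' (fun _ => zero_le_one) partA (δ/8) hδ8
  have hε4 : 0 < ε/4 := by linarith
  obtain ⟨z, hz0, hzle⟩ := key_small' c (ε/4) 1 hc0 hε4 one_pos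
  obtain ⟨u, hu0, hule⟩ := key_small' c (ε/4) (7 + 2*MW) hc0 hε4 (by linarith)
  obtain ⟨εs1, hεs10, hεs1le⟩ := key_small' c (ε/4) (MT + Mη + 2) hc0 hε4 (by linarith)
  obtain ⟨δs1, hδs1, hsmev⟩ := smooth_unified Ψ θ0 η0 Ψdotθ Ψdotη β hβpos hsmooth
    θhat ηhat Mη hMη0 εs1 hεs10
  have hU1 := oP_ev' hse (1/2) (δ/8) one_half_pos hδ8
  have hU2 := oP_ev' hse u (δ/8) hu0 hδ8
  have hZ1 := oP_ev' hroot 1 (δ/8) one_pos hδ8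
  have hZ2 := oP_ev' hroot z (δ/8) hz0 hδ8
  have hθc := oP_ev' hcons δs1 (δ/8) hδs1 hδ8
  filter_upwards [hMW, hMη, hMT, hU1, hU2, hZ1, hZ2, hθc, hsmev]
    with n e1 e2 e3 e4 e5 e6 e7 e8 e9
  have hsub : {ω | ε * 1 ≤
        ‖(Real.sqrt n) • (θhat n ω - θ0) -
          A.symm ((Real.sqrt n) • ((Ψn n ω θ0 η0 - Ψ θ0 η0) +
            Ψdotη (ηhat n ω - η0)))‖} ⊆
      {ω | MW * 1 < Real.sqrt n * ‖Ψn n ω θ0 η0‖} ∪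
      ({ω | Mη * (n:ℝ) ^ (-β) < ‖ηhat n ω - η0‖} ∪
      ({ω | MT * 1 < Real.sqrt n * ‖θhat n ω - θ0‖} ∪
      ({ω | (1:ℝ)/2 ≤
          ‖(Real.sqrt n) • (Ψn n ω (θhat n ω) (ηhat n ω) - Ψ (θhat n ω) (ηhat n ω)) -
            (Real.sqrt n) • (Ψn n ω θ0 η0 - Ψ θ0 η0)‖ /
            (1 + Real.sqrt n * ‖Ψn n ω (θhat n ω) (ηhat n ω)‖ +
              Real.sqrt n * ‖Ψ (θhat n ω) (ηhat n ω)‖)} ∪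
      ({ω | u ≤
          ‖(Real.sqrt n) • (Ψn n ω (θhat n ω) (ηhat n ω) - Ψ (θhat n ω) (ηhat n ω)) -
            (Real.sqrt n) • (Ψn n ω θ0 η0 - Ψ θ0 η0)‖ /
            (1 + Real.sqrt n * ‖Ψn n ω (θhat n ω) (ηhat n ω)‖ +
              Real.sqrt n * ‖Ψ (θhat n ω) (ηhat n ω)‖)} ∪
      ({ω | (1:ℝ) ≤ Real.sqrt n * ‖Ψn n ω (θhat n ω) (ηhat n ω)‖} ∪
      ({ω | z ≤ Real.sqrt n * ‖Ψn n ω (θhat n ω) (ηhat n ω)‖} ∪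
       {ω | δs1 ≤ ‖θhat n ω - θ0‖}))))))  := by
    intro ω hω
    simp only [Set.mem_setOf_eq] at hω
    by_contra hcon
    simp only [Set.mem_union, Set.mem_setOf_eq, not_or, not_lt, not_le] at hcon
    obtain ⟨hW, hη, hTω, hUω1, hUω2, hZω1, hZω2, hθω⟩ := hcon
    have hVb := e9 ω hη hθω
    have hSb := PT1 n ω
    have hPb := PT3 n ω
    have hFb := PT5 n ω
    set DD : ℝ := ‖(Real.sqrt n) • (Ψn n ω (θhat n ω) (ηhat n ω) -
        Ψ (θhat n ω) (ηhat n ω)) - (Real.sqrt n) • (Ψn n ω θ0 η0 - Ψ θ0 η0)‖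
    set ZZ : ℝ := Real.sqrt n * ‖Ψn n ω (θhat n ω) (ηhat n ω)‖
    set SS : ℝ := Real.sqrt n * ‖Ψ (θhat n ω) (ηhat n ω)‖
    set WW : ℝ := Real.sqrt n * ‖Ψn n ω θ0 η0‖
    set TT : ℝ := Real.sqrt n * ‖θhat n ω - θ0‖
    set VV : ℝ := Real.sqrt n * ‖Ψ (θhat n ω) (ηhat n ω) - Ψ θ0 η0 -
        (Ψdotθ (θhat n ω - θ0) + Ψdotη (ηhat n ω - η0))‖
    set PP : ℝ := ‖(Real.sqrt n) • Ψ (θhat n ω) (ηhat n ω) +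
        (Real.sqrt n) • Ψn n ω θ0 η0‖
    set FF : ℝ := ‖(Real.sqrt n) • (θhat n ω - θ0) -
        A.symm ((Real.sqrt n) • ((Ψn n ω θ0 η0 - Ψ θ0 η0) + Ψdotη (ηhat n ω - η0)))‖
    have hD0 : (0:ℝ) ≤ DD := norm_nonneg _
    have hZ0 : (0:ℝ) ≤ ZZ := mul_nonneg (hsq n) (norm_nonneg _)
    have hS0 : (0:ℝ) ≤ SS := mul_nonneg (hsq n) (norm_nonneg _)
    have hT0 : (0:ℝ) ≤ TT := mul_nonneg (hsq n) (norm_nonneg _)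
    have hV0 : (0:ℝ) ≤ VV := mul_nonneg (hsq n) (norm_nonneg _)
    have hP0 : (0:ℝ) ≤ PP := norm_nonneg _
    clear_value DD ZZ SS WW TT VV PP FF
    have hden : (0:ℝ) < 1 + ZZ + SS := by linarith
    have hDlt1 : DD < 1/2 * (1 + ZZ + SS) := (div_lt_iff₀ hden).mp hUω1
    have hDlt2 : DD < u * (1 + ZZ + SS) := (div_lt_iff₀ hden).mp hUω2
    have hSlt : SS < 4 + 2*MW := by linarith
    have hcD : c * DD ≤ ε/4 := by
      refine le_trans ?_ hule
      refine mul_le_mul_of_nonneg_left ?_ hc0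
      have := mul_le_mul_of_nonneg_left
        (show 1 + ZZ + SS ≤ 7 + 2*MW by linarith) hu0.le
      linarith
    have hcZ : c * ZZ ≤ ε/4 := by
      refine le_trans ?_ hzle
      refine mul_le_mul_of_nonneg_left ?_ hc0
      linarith
    have hcV : c * VV ≤ ε/4 := by
      refine le_trans ?_ hεs1le
      refine mul_le_mul_of_nonneg_left ?_ hc0
      have := mul_le_mul_of_nonneg_left (show TT ≤ MT by linarith) hεs10.le
      linarith [hεs10.le]
    have hcP : c * PP ≤ ε/4 + ε/4 := by
      have := mul_le_mul_of_nonneg_left hPb hc0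
      linarith
    have hF : FF < ε := by linarith [hFb, hcP, hcV, hε]
    linarith [hω, hF]
  refine (measure_mono hsub).trans ?_
  refine (union8' P _ _ _ _ _ _ _ _ (δ/8) hδ8.le e1 e2 e3 e4 e5 e6 e7 e8).trans ?_
  rw [show 8*(δ/8) = δ by ring]
end
end
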